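/- arXiv:1606.00129 — 4 statements merged into one kernel-verified Lean document; each statement's English description precedes it below -/
import Mathlib

section
/- Let X be a geodesic metric space which is δ-hyperbolic (four-point condition) and let e ∈ X. Then: (i) there is a Morse gauge N₀, depending only on δ, such that every geodesic in X is N₀-Morse, so X^(N)_e = X for every Morse gauge N ≥ N₀; (ii) for every Morse gauge N, the map ∂X^(N)_e → ∂∞X induced by the inclusion X^(N)_e ⊆ X is, for any visual metrics, a quasi-symmetry onto its image, and for every N ≥ N₀ this map is a surjective quasi-symmetry. -/
open Set Filter

section Defs

variable {X : Type*} [MetricSpace X]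

/-- A geodesic segment of length `L`, parametrized by arc length on `[0, L]`. -/
def IsGeodesicSeg (γ : ℝ → X) (L : ℝ) : Prop :=
  0 ≤ L ∧ ∀ s ∈ Icc (0:ℝ) L, ∀ t ∈ Icc (0:ℝ) L, dist (γ s) (γ t) = |s - t|

/-- A geodesic from `x` to `y`, parametrized by arc length on `[0, dist x y]`. -/
def IsGeodesicFromTo (γ : ℝ → X) (x y : X) : Prop :=
  IsGeodesicSeg γ (dist x y) ∧ γ 0 = x ∧ γ (dist x y) = y

/-- A geodesic ray, parametrized by arc length on `[0, ∞)`. -/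
def IsGeodesicRay (ℓ : ℝ → X) : Prop :=
  ∀ s ∈ Ici (0:ℝ), ∀ t ∈ Ici (0:ℝ), dist (ℓ s) (ℓ t) = |s - t|

/-- A geodesic metric space: any two points are joined by a geodesic. -/
def GeodesicSpace (X : Type*) [MetricSpace X] : Prop :=
  ∀ x y : X, ∃ γ : ℝ → X, IsGeodesicFromTo γ x y

/-- A `(K, C)`-quasi-geodesic defined on the interval `I ⊆ ℝ`. -/
def IsQuasiGeodesicOn (K C : ℝ) (I : Set ℝ) (σ : ℝ → X) : Prop :=
  ∀ s ∈ I, ∀ t ∈ I,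
    |s - t| / K - C ≤ dist (σ s) (σ t) ∧ dist (σ s) (σ t) ≤ K * |s - t| + C

/-- A Morse gauge: a nonnegative real `N K C` for every `K ≥ 1`, `C ≥ 0`. -/
def IsMorseGauge (N : ℝ → ℝ → ℝ) : Prop :=
  ∀ K C : ℝ, 1 ≤ K → 0 ≤ C → 0 ≤ N K C

/-- A subset `G ⊆ X` is `N`-Morse if for all `K ≥ 1`, `C ≥ 0`, every
`(K,C)`-quasi-geodesic with endpoints on `G` is contained in the closed
`N K C`-neighbourhood of `G`. -/
def IsMorseSet (N : ℝ → ℝ → ℝ) (G : Set X) : Prop :=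
  ∀ K C : ℝ, 1 ≤ K → 0 ≤ C → ∀ a b : ℝ, a ≤ b → ∀ σ : ℝ → X,
    IsQuasiGeodesicOn K C (Icc a b) σ → σ a ∈ G → σ b ∈ G →
    ∀ s ∈ Icc a b, ∃ g ∈ G, dist (σ s) g ≤ N K C

/-- An `N`-Morse geodesic from `x` to `y`. -/
def IsMorseGeodesicFromTo (N : ℝ → ℝ → ℝ) (γ : ℝ → X) (x y : X) : Prop :=
  IsGeodesicFromTo γ x y ∧ IsMorseSet N (γ '' Icc 0 (dist x y))

/-- An `N`-Morse geodesic ray. -/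
def IsMorseRay (N : ℝ → ℝ → ℝ) (ℓ : ℝ → X) : Prop :=
  IsGeodesicRay ℓ ∧ IsMorseSet N (ℓ '' Ici 0)

/-- The stratum `X^(N)_e`: points joined to `e` by an `N`-Morse geodesic. -/
def morseStratum (N : ℝ → ℝ → ℝ) (e : X) : Set X :=
  {y | ∃ γ : ℝ → X, IsMorseGeodesicFromTo N γ e y}

/-- The Gromov product `(x·y)_w`. -/
noncomputable def gprod (w x y : X) : ℝ := (dist w x + dist w y - dist x y) / 2

/-- A `B`-quasi-convex subset: geodesics with endpoints in `Y` stay in the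
closed `B`-neighbourhood of `Y`. -/
def IsQuasiConvex (B : ℝ) (Y : Set X) : Prop :=
  ∀ x ∈ Y, ∀ y ∈ Y, ∀ γ : ℝ → X, IsGeodesicFromTo γ x y →
    ∀ s ∈ Icc (0:ℝ) (dist x y), ∃ g ∈ Y, dist (γ s) g ≤ B

/-- An `N`-stable subset: quasi-convex, and any two of its points are joined
by an `N`-Morse geodesic of `X`. -/
def IsStableSubset (N : ℝ → ℝ → ℝ) (Y : Set X) : Prop :=
  (∃ B : ℝ, 0 ≤ B ∧ IsQuasiConvex B Y) ∧
    ∀ x ∈ Y, ∀ y ∈ Y, ∃ γ : ℝ → X, IsMorseGeodesicFromTo N γ x y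

variable {Y : Type*} [MetricSpace Y]

/-- A `(K,C)`-quasi-isometric embedding. -/
def IsQIEmbedding (K C : ℝ) (q : X → Y) : Prop :=
  ∀ x x' : X,
    dist x x' / K - C ≤ dist (q x) (q x') ∧ dist (q x) (q x') ≤ K * dist x x' + C

/-- A `(K,C)`-quasi-isometry. -/
def IsQuasiIsometry (K C : ℝ) (q : X → Y) : Prop :=
  IsQIEmbedding K C q ∧ ∀ y : Y, ∃ x : X, dist y (q x) ≤ C

end Defs

section Boundary

variable {X : Type*} [MetricSpace X]

/-- A sequence converges at infinity with respect to the basepoint `e`. -/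
def ConvAtInf (e : X) (f : ℕ → X) : Prop :=
  Tendsto (fun p : ℕ × ℕ => gprod e (f p.1) (f p.2)) atTop atTop

/-- Two sequences converging at infinity are equivalent. -/
def EquivAtInf (e : X) (f g : ℕ → X) : Prop :=
  Tendsto (fun p : ℕ × ℕ => gprod e (f p.1) (g p.2)) atTop atTop

/-- Sequences in `S` converging at infinity. -/
abbrev BSeq (S : Set X) (e : X) : Type _ :=
  {f : ℕ → X // (∀ n, f n ∈ S) ∧ ConvAtInf e f}

/-- The sequential boundary of `S ⊆ X` with basepoint `e`: sequences in `S`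
converging at infinity, up to equivalence. -/
def SeqBoundary (S : Set X) (e : X) : Type _ :=
  Quot (fun f g : BSeq S e => EquivAtInf e f.1 g.1)

/-- The boundary point represented by a convergent sequence. -/
def SeqBoundary.mk {S : Set X} {e : X} (f : BSeq S e) : SeqBoundary S e :=
  Quot.mk _ f

/-- The liminf of Gromov products of two sequences, valued in `EReal`. -/
noncomputable def seqGP (e : X) (f g : ℕ → X) : EReal :=
  Filter.liminf (fun p : ℕ × ℕ => ((gprod e (f p.1) (g p.2) : ℝ) : EReal)) atTop

/-- The Gromov product of two boundary points: the supremum over representing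
sequences of the liminf of Gromov products. -/
noncomputable def bGP (S : Set X) (e : X) (ξ η : SeqBoundary S e) : EReal :=
  sSup {r : EReal | ∃ f g : BSeq S e,
    SeqBoundary.mk f = ξ ∧ SeqBoundary.mk g = η ∧ r = seqGP e f.1 g.1}

open Classical in
/-- `exp (−ε·r)` for an extended real `r`, with value `0` at `r = ⊤`. -/
noncomputable def visGauge (ε : ℝ) (r : EReal) : ℝ :=
  if r = ⊤ then 0 else Real.exp (-ε * r.toReal)

/-- `d` is a visual metric on the sequential boundary of `S`:
a metric comparable to `exp(−ε·(Gromov product))` for some parameter `ε > 0`. -/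
def IsVisualMetric (S : Set X) (e : X)
    (d : SeqBoundary S e → SeqBoundary S e → ℝ) : Prop :=
  (∀ ξ η, 0 ≤ d ξ η) ∧ (∀ ξ η, d ξ η = d η ξ) ∧
  (∀ ξ η ζ, d ξ ζ ≤ d ξ η + d η ζ) ∧ (∀ ξ η, d ξ η = 0 ↔ ξ = η) ∧
  ∃ ε : ℝ, 0 < ε ∧ ∃ k₁ : ℝ, 0 < k₁ ∧ ∃ k₂ : ℝ, 0 < k₂ ∧
    ∀ ξ η, k₁ * visGauge ε (bGP S e ξ η) ≤ d ξ η ∧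
      d ξ η ≤ k₂ * visGauge ε (bGP S e ξ η)

/-- `η` is (the restriction of) a self-homeomorphism of `[0,∞)`. -/
def IsHomeoIci (η : ℝ → ℝ) : Prop :=
  ContinuousOn η (Ici 0) ∧ StrictMonoOn η (Ici 0) ∧ η 0 = 0 ∧
    Tendsto η atTop atTop ∧ ∀ t ∈ Ici (0:ℝ), 0 ≤ η t

/-- `F` is a quasi-symmetry onto its image, for the "distances" `dA`, `dB`. -/
def IsQuasiSymmetryOnto {A B : Type*} (dA : A → A → ℝ) (dB : B → B → ℝ)
    (F : A → B) : Prop :=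
  Function.Injective F ∧ ∃ η : ℝ → ℝ, IsHomeoIci η ∧
    ∀ x y z : A, x ≠ y → x ≠ z → y ≠ z →
      dB (F x) (F y) / dB (F x) (F z) ≤ η (dA x y / dA x z)

end Boundary

/-- `X` (with basepoint `x`) is stably subsumed by `Y` (with basepoint `y`):
every stratum of `X` quasi-isometrically embeds in some stratum of `Y`. -/
def StablySubsumed (X Y : Type*) [MetricSpace X] [MetricSpace Y]
    (x : X) (y : Y) : Prop :=
  ∀ N : ℝ → ℝ → ℝ, IsMorseGauge N →
    ∃ N' : ℝ → ℝ → ℝ, IsMorseGauge N' ∧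
      ∃ K C : ℝ, 1 ≤ K ∧ 0 ≤ C ∧ ∃ f : X → Y,
        (∀ a ∈ morseStratum N x, f a ∈ morseStratum N' y) ∧
        ∀ a ∈ morseStratum N x, ∀ b ∈ morseStratum N x,
          dist a b / K - C ≤ dist (f a) (f b) ∧ dist (f a) (f b) ≤ K * dist a b + C

/-- Durham–Taylor stability of `f : Y → X`. -/
def DTStable {Y X : Type*} [MetricSpace Y] [MetricSpace X] (f : Y → X) : Prop :=
  ∀ K C : ℝ, 1 ≤ K → 0 ≤ C → ∃ R : ℝ, 0 ≤ R ∧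
    ∀ a₁ b₁ a₂ b₂ : ℝ, a₁ ≤ b₁ → a₂ ≤ b₂ → ∀ σ₁ σ₂ : ℝ → X,
      IsQuasiGeodesicOn K C (Icc a₁ b₁) σ₁ → IsQuasiGeodesicOn K C (Icc a₂ b₂) σ₂ →
      σ₁ a₁ = σ₂ a₂ → σ₁ b₁ = σ₂ b₂ →
      σ₁ a₁ ∈ Set.range f → σ₁ b₁ ∈ Set.range f →
      (∀ s ∈ Icc a₁ b₁, ∃ t ∈ Icc a₂ b₂, dist (σ₁ s) (σ₂ t) ≤ R) ∧
      (∀ t ∈ Icc a₂ b₂, ∃ s ∈ Icc a₁ b₁, dist (σ₁ s) (σ₂ t) ≤ R)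

section Geom

variable {X : Type*} [MetricSpace X] {δ : ℝ}

lemma gprod_nonneg' (w x y : X) : 0 ≤ gprod w x y := by
  have h := dist_triangle x w y
  unfold gprod
  rw [dist_comm x w] at h
  linarith

lemma gprod_comm' (w x y : X) : gprod w x y = gprod w y x := by
  unfold gprod; rw [dist_comm x y]; ring

lemma geo_cont {γ : ℝ → X} {L : ℝ} (h : IsGeodesicSeg γ L) :
    ContinuousOn γ (Icc 0 L) := by
  apply LipschitzOnWith.continuousOn (K := 1)
  apply LipschitzOnWith.of_dist_le_mul
  intro s hs t ht
  rw [h.2 s hs t ht, Real.dist_eq]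
  simp

lemma sub_geo {γ : ℝ → X} {L : ℝ} (h : IsGeodesicSeg γ L) {u v : ℝ}
    (h0 : 0 ≤ u) (huv : u ≤ v) (hvL : v ≤ L) :
    IsGeodesicFromTo (fun w => γ (u + w)) (γ u) (γ v) := by
  have hd : dist (γ u) (γ v) = v - u := by
    rw [h.2 u ⟨h0, le_trans huv hvL⟩ v ⟨le_trans h0 huv, hvL⟩]
    rw [abs_of_nonpos (by linarith)]; ring
  refine ⟨⟨by rw [hd]; linarith, ?_⟩, by simp, by rw [hd]; simp [show u + (v-u) = v by ring]⟩
  intro s hs t ht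
  rw [hd] at hs ht
  have hs' : u + s ∈ Icc 0 L := ⟨by linarith [hs.1], by linarith [hs.2]⟩
  have ht' : u + t ∈ Icc 0 L := ⟨by linarith [ht.1], by linarith [ht.2]⟩
  rw [h.2 _ hs' _ ht']
  congr 1; ring

lemma sub_geo_rev {γ : ℝ → X} {L : ℝ} (h : IsGeodesicSeg γ L) {u v : ℝ}
    (h0 : 0 ≤ v) (huv : v ≤ u) (hvL : u ≤ L) :
    IsGeodesicFromTo (fun w => γ (u - w)) (γ u) (γ v) := by
  have hd : dist (γ u) (γ v) = u - v := by
    rw [h.2 u ⟨le_trans h0 huv, hvL⟩ v ⟨h0, le_trans huv hvL⟩]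
    rw [abs_of_nonneg (by linarith)]
  refine ⟨⟨by rw [hd]; linarith, ?_⟩, by simp, by rw [hd]; simp [show u - (u-v) = v by ring]⟩
  intro s hs t ht
  rw [hd] at hs ht
  have hs' : u - s ∈ Icc 0 L := ⟨by linarith [hs.2], by linarith [hs.1]⟩
  have ht' : u - t ∈ Icc 0 L := ⟨by linarith [ht.2], by linarith [ht.1]⟩
  rw [h.2 _ hs' _ ht']
  rw [show u - s - (u - t) = -(s - t) by ring, abs_neg]

/-- Projection: any point is within `(x·y)_p + 2δ` of a geodesic from `x` to `y`. -/
lemma proj_lemma (hδ : 0 ≤ δ)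
    (hyp : ∀ w x y z : X, gprod w x y ≥ min (gprod w x z) (gprod w z y) - δ)
    {γ : ℝ → X} {x y : X} (hγ : IsGeodesicFromTo γ x y) (p : X) :
    ∃ u ∈ Icc (0:ℝ) (dist x y), dist p (γ u) ≤ gprod p x y + 2*δ := by
  have hL0 : 0 ≤ dist x y := dist_nonneg
  set L := dist x y with hL
  set f : ℝ → ℝ := fun u => dist (γ u) x - dist (γ u) y with hf
  have hcf : ContinuousOn f (Icc 0 L) := by
    apply ContinuousOn.sub
    · exact (continuous_id.dist continuous_const).comp_continuousOn (geo_cont hγ.1)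
    · exact (continuous_id.dist continuous_const).comp_continuousOn (geo_cont hγ.1)
  have hmem0 : (0:ℝ) ∈ Icc (0:ℝ) L := ⟨le_refl _, hL0⟩
  have hmemL : L ∈ Icc (0:ℝ) L := ⟨hL0, le_refl _⟩
  have hγ0 : γ 0 = x := hγ.2.1
  have hγL : γ L = y := hγ.2.2
  have hf0 : f 0 = -L := by
    show dist (γ 0) x - dist (γ 0) y = -L
    rw [hγ0, dist_self, ← hL]; ring
  have hfL : f L = L := by
    show dist (γ L) x - dist (γ L) y = L
    rw [hγL, dist_self, dist_comm y x, ← hL]; ring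
  have hcmem : dist p x - dist p y ∈ Icc (f 0) (f L) := by
    rw [hf0, hfL]
    have h1 : |dist x p - dist y p| ≤ dist x y := abs_dist_sub_le x y p
    rw [abs_le] at h1
    rw [dist_comm p x, dist_comm p y]
    exact ⟨by linarith [h1.1], by linarith [h1.2]⟩
  obtain ⟨u, hu, hfu⟩ := intermediate_value_Icc hL0 hcf hcmem
  refine ⟨u, hu, ?_⟩
  have hzx : dist (γ u) x = u := by
    rw [← hγ0, hγ.1.2 u hu 0 hmem0, abs_of_nonneg (by linarith [hu.1])]; ring
  have hzy : dist (γ u) y = L - u := by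
    rw [← hγL, hγ.1.2 u hu L hmemL, abs_of_nonpos (by linarith [hu.2])]; ring
  have hfu' : dist (γ u) x - dist (γ u) y = dist p x - dist p y := hfu
  have hzxy : gprod (γ u) x y = 0 := by
    unfold gprod; rw [hzx, hzy, ← hL]; ring
  have heq : gprod (γ u) x p = gprod (γ u) p y := by
    unfold gprod
    rw [dist_comm x p]
    have e1 : dist (γ u) x = dist x (γ u) := dist_comm _ _
    have e2 : dist (γ u) y = dist y (γ u) := dist_comm _ _
    have e3 : dist (γ u) p = dist p (γ u) := dist_comm _ _
    linarith [hfu']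
  have h4 := hyp (γ u) x y p
  rw [hzxy, heq, min_self] at h4
  have h6 : gprod (γ u) p y ≤ δ := by linarith
  have h5 : gprod (γ u) x p ≤ δ := heq ▸ h6
  unfold gprod at h5 h6 ⊢
  have e2 : dist (γ u) p = dist p (γ u) := dist_comm _ _
  have e3 : dist x p = dist p x := dist_comm _ _
  rw [← hL]
  linarith [hzx, hzy]

/-- Slim triangles. -/
lemma slim_lemma (hδ : 0 ≤ δ)
    (hyp : ∀ w x y z : X, gprod w x y ≥ min (gprod w x z) (gprod w z y) - δ)
    {γ : ℝ → X} {x y : X} (hγ : IsGeodesicFromTo γ x y) {u : ℝ}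
    (hu : u ∈ Icc (0:ℝ) (dist x y)) (q : X)
    {α β : ℝ → X} (hα : IsGeodesicFromTo α x q) (hβ : IsGeodesicFromTo β q y) :
    (∃ v ∈ Icc (0:ℝ) (dist x q), dist (γ u) (α v) ≤ 3*δ) ∨
    (∃ v ∈ Icc (0:ℝ) (dist q y), dist (γ u) (β v) ≤ 3*δ) := by
  have hγ0 : γ 0 = x := hγ.2.1
  have hγL : γ (dist x y) = y := hγ.2.2
  have hzx : dist (γ u) x = u := by
    rw [← hγ0, hγ.1.2 u hu 0 ⟨le_refl _, dist_nonneg⟩, abs_of_nonneg (by linarith [hu.1])]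
    ring
  have hzy : dist (γ u) y = dist x y - u := by
    have h := hγ.1.2 u hu (dist x y) ⟨dist_nonneg, le_refl _⟩
    rw [hγL] at h
    rw [h, abs_of_nonpos (by linarith [hu.2])]
    ring
  have hzxy : gprod (γ u) x y = 0 := by unfold gprod; rw [hzx, hzy]; ring
  have h4 := hyp (γ u) x y q
  rw [hzxy] at h4
  rcases le_total (gprod (γ u) x q) (gprod (γ u) q y) with hmin | hmin
  · left
    have h5 : gprod (γ u) x q ≤ δ := by
      have := min_le_left (gprod (γ u) x q) (gprod (γ u) q y)
      have hm : min (gprod (γ u) x q) (gprod (γ u) q y) = gprod (γ u) x q :=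
        min_eq_left hmin
      rw [hm] at h4; linarith
    obtain ⟨v, hv, hdv⟩ := proj_lemma hδ hyp hα (γ u)
    exact ⟨v, hv, by linarith⟩
  · right
    have h5 : gprod (γ u) q y ≤ δ := by
      have hm : min (gprod (γ u) x q) (gprod (γ u) q y) = gprod (γ u) q y :=
        min_eq_right hmin
      rw [hm] at h4; linarith
    obtain ⟨v, hv, hdv⟩ := proj_lemma hδ hyp hβ (γ u)
    exact ⟨v, hv, by linarith⟩

end Geom
section EC

variable {X : Type*} [MetricSpace X] {δ : ℝ}

lemma two_pow_aux : ∀ s : ℕ, s^2 + 2*s ≤ 2^(s+1) := by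
  intro s
  induction s with
  | zero => norm_num
  | succ k ih =>
    rcases Nat.lt_or_ge k 2 with h | h
    · interval_cases k <;> norm_num
    · have h3 : 3 ≤ k^2 := by nlinarith
      have h2 : 2*k+3 ≤ k^2 + 2*k := by omega
      calc (k+1)^2 + 2*(k+1) = (k^2 + 2*k) + (2*k+3) := by ring
        _ ≤ 2^(k+1) + 2^(k+1) := by
            have := ih
            omega
        _ = 2^(k+1+1) := by ring

lemma clog_le_sqrt (m : ℕ) : Nat.clog 2 m ≤ Nat.sqrt m + 1 := by
  rw [Nat.clog_le_iff_le_pow (by norm_num)]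
  have h1 : m < (Nat.sqrt m + 1) * (Nat.sqrt m + 1) := Nat.lt_succ_sqrt m
  have h2 := two_pow_aux (Nat.sqrt m)
  have e : (Nat.sqrt m + 1) * (Nat.sqrt m + 1) = Nat.sqrt m ^ 2 + 2*Nat.sqrt m + 1 := by
    ring
  rw [e] at h1
  exact le_trans (Nat.lt_succ_iff.mp h1) h2

lemma clog_le_real_sqrt (m : ℕ) : (Nat.clog 2 m : ℝ) ≤ Real.sqrt m + 1 := by
  have h1 : (Nat.clog 2 m : ℝ) ≤ (Nat.sqrt m : ℝ) + 1 := by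
    exact_mod_cast clog_le_sqrt m
  have h2 : (Nat.sqrt m : ℝ) ≤ Real.sqrt m := by
    have : ((Nat.sqrt m : ℝ))^2 ≤ (m : ℝ) := by exact_mod_cast Nat.sqrt_le' m
    nlinarith [Real.sq_sqrt (show (0:ℝ) ≤ m by positivity),
      Real.sqrt_nonneg (m:ℝ), (by positivity : (0:ℝ) ≤ (Nat.sqrt m : ℝ))]
  linarith

/-- Exponential contraction: a point on a geodesic joining the endpoints of a
chain with steps `≤ Δ` is within `3δ·⌈log₂ n⌉ + Δ` of the chain. -/
lemma chain_contract (hδ : 0 ≤ δ) (hX : GeodesicSpace X)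
    (hyp : ∀ w x y z : X, gprod w x y ≥ min (gprod w x z) (gprod w z y) - δ)
    {Δ : ℝ} (hΔ : 0 ≤ Δ) :
    ∀ n : ℕ, ∀ q : ℕ → X, (∀ i < n, dist (q i) (q (i+1)) ≤ Δ) →
    ∀ γ : ℝ → X, IsGeodesicFromTo γ (q 0) (q n) →
    ∀ u ∈ Icc (0:ℝ) (dist (q 0) (q n)),
      ∃ i ≤ n, dist (γ u) (q i) ≤ 3*δ*(Nat.clog 2 n) + Δ := by
  intro n
  induction n using Nat.strong_induction_on with
  | _ n IH =>
    intro q hq γ hγ u hu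
    match n, IH with
    | 0, _ =>
      refine ⟨0, le_refl _, ?_⟩
      have h0 : dist (q 0) (q 0) = 0 := dist_self _
      have hu' : u = 0 := le_antisymm (h0 ▸ hu.2) hu.1
      rw [hu', hγ.2.1, dist_self]
      positivity
    | 1, _ =>
      refine ⟨0, by norm_num, ?_⟩
      have hzx : dist (γ u) (q 0) = u := by
        rw [← hγ.2.1, hγ.1.2 u hu 0 ⟨le_refl _, dist_nonneg⟩,
          abs_of_nonneg (by linarith [hu.1])]
        ring
      have : dist (q 0) (q 1) ≤ Δ := hq 0 (by norm_num)
      rw [hzx]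
      simp only [Nat.clog_one_right]
      push_cast
      nlinarith [hu.2]
    | (n+2), IH =>
      set m := (n + 3) / 2 with hm
      have hn2 : 2 ≤ n + 2 := by omega
      have hm1 : 1 ≤ m := by omega
      have hmn : m < n + 2 := by omega
      have hnm1 : 1 ≤ n + 2 - m := by omega
      have hnmm : n + 2 - m ≤ m := by omega
      have hclog : Nat.clog 2 m + 1 = Nat.clog 2 (n+2) := by
        have e : (n+2+2-1)/2 = m := by omega
        rw [Nat.clog_of_two_le (by norm_num) hn2, e]
      obtain ⟨α, hα⟩ := hX (q 0) (q m)
      obtain ⟨β, hβ⟩ := hX (q m) (q (n+2))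
      rcases slim_lemma hδ hyp hγ hu (q m) hα hβ with ⟨v, hv, hdv⟩ | ⟨v, hv, hdv⟩
      · obtain ⟨i, hi, hdi⟩ := IH m hmn q (fun i hi' => hq i (by omega)) α hα v hv
        refine ⟨i, by omega, ?_⟩
        have := dist_triangle (γ u) (α v) (q i)
        have hc : (Nat.clog 2 m : ℝ) + 1 = (Nat.clog 2 (n+2) : ℝ) := by
          exact_mod_cast hclog
        nlinarith
      · set q' : ℕ → X := fun j => q (m + j) with hq'
        have hq'0 : q' 0 = q m := rfl
        have hq'e : q' (n + 2 - m) = q (n+2) := by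
          show q (m + (n + 2 - m)) = q (n+2)
          congr 1
          omega
        have hβ' : IsGeodesicFromTo β (q' 0) (q' (n+2-m)) := by
          rw [hq'0, hq'e]; exact hβ
        obtain ⟨i, hi, hdi⟩ := IH (n+2-m) (by omega) q'
          (fun i hi' => by
            show dist (q (m+i)) (q (m+i+1)) ≤ Δ
            exact hq (m+i) (by omega))
          β hβ' v (by rwa [hq'0, hq'e])
        refine ⟨m + i, by omega, ?_⟩
        have := dist_triangle (γ u) (β v) (q' i)
        have hc : (Nat.clog 2 (n+2-m) : ℝ) ≤ (Nat.clog 2 m : ℝ) := by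
          exact_mod_cast Nat.clog_mono_right 2 hnmm
        have hc2 : (Nat.clog 2 m : ℝ) + 1 = (Nat.clog 2 (n+2) : ℝ) := by
          exact_mod_cast hclog
        have hq'i : q' i = q (m + i) := rfl
        rw [← hq'i]
        nlinarith

end EC
section CatChain

noncomputable def M0c (δ K C : ℝ) : ℝ :=
  (3*δ*Real.sqrt (8*K + K*C + 7) + Real.sqrt (2 + K + C + 3*δ))^2

noncomputable def D0c (δ K C : ℝ) : ℝ := M0c δ K C + 1

noncomputable def N0c (δ K C : ℝ) : ℝ :=
  K*K*(3*(D0c δ K C) + 1 + 2*C) + C + D0c δ K C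

lemma D0c_nonneg {δ K C : ℝ} : 1 ≤ D0c δ K C := by
  unfold D0c M0c
  nlinarith [sq_nonneg (3*δ*Real.sqrt (8*K + K*C + 7) + Real.sqrt (2 + K + C + 3*δ))]

lemma N0c_nonneg {δ K C : ℝ} (hK : 1 ≤ K) (hC : 0 ≤ C) : 0 ≤ N0c δ K C := by
  unfold N0c
  have := D0c_nonneg (δ := δ) (K := K) (C := C)
  nlinarith

variable {X : Type*} [MetricSpace X]

def catc (n1 : ℕ) (q1 q2 : ℕ → X) : ℕ → X := fun j => if j < n1 then q1 j else q2 (j - n1)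

lemma catc_zero {n1 : ℕ} {q1 q2 : ℕ → X} (hj : q1 n1 = q2 0) :
    catc n1 q1 q2 0 = q1 0 := by
  unfold catc
  rcases Nat.eq_zero_or_pos n1 with h | h
  · simp [h, ← hj]
  · simp [h]

lemma catc_end {n1 n2 : ℕ} {q1 q2 : ℕ → X} :
    catc n1 q1 q2 (n1 + n2) = q2 n2 := by
  unfold catc
  have h : ¬ (n1 + n2 < n1) := by omega
  simp [h]

lemma catc_step {n1 n2 : ℕ} {q1 q2 : ℕ → X} {Δ : ℝ}
    (h1 : ∀ i < n1, dist (q1 i) (q1 (i+1)) ≤ Δ)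
    (h2 : ∀ i < n2, dist (q2 i) (q2 (i+1)) ≤ Δ)
    (hj : q1 n1 = q2 0) :
    ∀ i < n1 + n2, dist (catc n1 q1 q2 i) (catc n1 q1 q2 (i+1)) ≤ Δ := by
  intro i hi
  unfold catc
  rcases Nat.lt_or_ge i n1 with h | h
  · rcases Nat.lt_or_ge (i+1) n1 with h' | h'
    · simpa [h, h'] using h1 i h
    · have hi1 : i + 1 = n1 := by omega
      have : ¬ (i+1 < n1) := by omega
      simp only [if_pos h, if_neg this]
      have e : i + 1 - n1 = 0 := by omega
      rw [e, ← hj, ← hi1]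
      exact h1 i h
  · have hnot : ¬ (i < n1) := by omega
    have hnot' : ¬ (i+1 < n1) := by omega
    simp only [if_neg hnot, if_neg hnot']
    have e : i + 1 - n1 = (i - n1) + 1 := by omega
    rw [e]
    exact h2 (i - n1) (by omega)

lemma catc_cases {n1 : ℕ} (q1 q2 : ℕ → X) (j : ℕ) :
    (∃ i, catc n1 q1 q2 j = q1 i) ∨ (∃ i, catc n1 q1 q2 j = q2 i) := by
  unfold catc
  split_ifs
  · exact Or.inl ⟨j, rfl⟩
  · exact Or.inr ⟨j - n1, rfl⟩

end CatChain
section StepA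

variable {X : Type*} [MetricSpace X] {δ : ℝ}

lemma abs_min_lip (u v c : ℝ) : |min u c - min v c| ≤ |u - v| := by
  have h := abs_min_sub_min_le_max u c v c
  simp only [sub_self, abs_zero] at h
  exact h.trans (by rw [max_eq_left (abs_nonneg _)])

lemma sample_chain {g : ℝ → X} {w z : X} (hg : IsGeodesicFromTo g w z) :
    (∀ i : ℕ, dist (g (min (i:ℝ) (dist w z))) (g (min ((i+1:ℕ):ℝ) (dist w z))) ≤ 1) ∧
    g (min ((0:ℕ):ℝ) (dist w z)) = w ∧
    g (min ((⌈dist w z⌉₊ : ℕ):ℝ) (dist w z)) = z ∧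
    (∀ i : ℕ, dist w (g (min (i:ℝ) (dist w z))) = min (i:ℝ) (dist w z)) := by
  have hℓ0 : 0 ≤ dist w z := dist_nonneg
  have hmem : ∀ i : ℕ, min (i:ℝ) (dist w z) ∈ Icc (0:ℝ) (dist w z) :=
    fun i => ⟨le_min (Nat.cast_nonneg i) hℓ0, min_le_right _ _⟩
  have h0mem : (0:ℝ) ∈ Icc (0:ℝ) (dist w z) := ⟨le_refl _, hℓ0⟩
  refine ⟨?_, ?_, ?_, ?_⟩
  · intro i
    rw [hg.1.2 _ (hmem i) _ (hmem (i+1))]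
    refine (abs_min_lip _ _ _).trans ?_
    push_cast
    rw [show (i:ℝ) - ((i:ℝ)+1) = -1 by ring, abs_neg, abs_one]
  · rw [show min ((0:ℕ):ℝ) (dist w z) = 0 by simp [hℓ0]]
    exact hg.2.1
  · rw [show min ((⌈dist w z⌉₊ : ℕ):ℝ) (dist w z) = dist w z from
      min_eq_right (Nat.le_ceil _)]
    exact hg.2.2
  · intro i
    have h := hg.1.2 0 h0mem _ (hmem i)
    rw [hg.2.1] at h
    rw [h, abs_of_nonpos (by linarith [(hmem i).1])]
    ring

set_option maxHeartbeats 1000000 in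
lemma stepA (hδ : 0 ≤ δ) (hX : GeodesicSpace X)
    (hyp : ∀ w x y z : X, gprod w x y ≥ min (gprod w x z) (gprod w z y) - δ)
    {K C a b : ℝ} (hK : 1 ≤ K) (hC : 0 ≤ C) (hab : a ≤ b) {σ : ℝ → X}
    (hσ : IsQuasiGeodesicOn K C (Icc a b) σ)
    {γ : ℝ → X} (hγ : IsGeodesicFromTo γ (σ a) (σ b)) :
    ∀ u ∈ Icc (0:ℝ) (dist (σ a) (σ b)),
      ∃ i ≤ ⌈b - a⌉₊, dist (γ u) (σ (min (a + (i:ℝ)) b)) ≤ D0c δ K C := by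
  have hK0 : (0:ℝ) < K := by linarith
  have hL0 : 0 ≤ dist (σ a) (σ b) := dist_nonneg
  set L := dist (σ a) (σ b) with hLdef
  set n := ⌈b - a⌉₊ with hndef
  set t : ℕ → ℝ := fun i => min (a + (i:ℝ)) b with htdef
  set p : ℕ → X := fun i => σ (t i) with hpdef
  have htmem : ∀ i, t i ∈ Icc a b := fun i =>
    ⟨le_min (by linarith [Nat.cast_nonneg (α := ℝ) i]) hab, min_le_right _ _⟩
  have ht0 : t 0 = a := by
    simp only [htdef, Nat.cast_zero, add_zero]
    exact min_eq_left hab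
  have htn : t n = b := by
    simp only [htdef]
    exact min_eq_right (by linarith [Nat.le_ceil (b - a)])
  have htlip : ∀ i j : ℕ, |t i - t j| ≤ |(i:ℝ) - (j:ℝ)| := by
    intro i j
    have h := abs_min_lip (a + (i:ℝ)) (a + (j:ℝ)) b
    simpa using h
  have hstep : ∀ i i' : ℕ, (i' = i + 1 ∨ i = i' + 1 ∨ i = i') →
      dist (p i) (p i') ≤ K + C := by
    intro i i' h
    have h1 : |t i - t i'| ≤ 1 := by
      refine (htlip i i').trans ?_
      rcases h with h|h|h <;> subst h <;> push_cast <;> simp [abs_le] <;> norm_num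
    have h2 := (hσ (t i) (htmem i) (t i') (htmem i')).2
    have h3 := mul_le_mul_of_nonneg_left h1 (le_of_lt hK0)
    linarith
  have hlow : ∀ i j : ℕ, |t i - t j| ≤ K * (dist (p i) (p j) + C) := by
    intro i j
    have h := (hσ (t i) (htmem i) (t j) (htmem j)).1
    have h2 : |t i - t j|/K ≤ dist (p i) (p j) + C := by linarith
    have h3 := mul_le_mul_of_nonneg_right h2 (le_of_lt hK0)
    rw [div_mul_cancel₀ _ (ne_of_gt hK0)] at h3
    linarith [h3]
  have htilow : ∀ i : ℕ, i ≤ n → a + (i:ℝ) - 1 ≤ t i := by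
    intro i hi
    simp only [htdef]
    rcases le_total (a + (i:ℝ)) b with h|h
    · rw [min_eq_left h]; linarith
    · rw [min_eq_right h]
      have h2 : (n:ℝ) < b - a + 1 := Nat.ceil_lt_add_one (by linarith)
      have h3 : (i:ℝ) ≤ (n:ℝ) := by exact_mod_cast hi
      linarith
  have hidx : ∀ i j : ℕ, i ≤ n → j ≤ n → |(i:ℝ) - (j:ℝ)| ≤ |t i - t j| + 1 := by
    intro i j hi hj
    have h2i : t i ≤ a + (i:ℝ) := min_le_left _ _
    have h2j : t j ≤ a + (j:ℝ) := min_le_left _ _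
    have h1i := htilow i hi
    have h1j := htilow j hj
    rcases le_total (i:ℝ) (j:ℝ) with h|h
    · rw [abs_of_nonpos (by linarith)]
      have h3 : t j - t i ≤ |t i - t j| := by
        rw [abs_sub_comm]; exact le_abs_self _
      linarith
    · rw [abs_of_nonneg (by linarith)]
      have h3 : t i - t j ≤ |t i - t j| := le_abs_self _
      linarith
  set P : Set X := p '' (Set.Iic n) with hPdef
  have hPne : P.Nonempty := ⟨p 0, 0, by simp, rfl⟩
  set h : ℝ → ℝ := fun u => Metric.infDist (γ u) P with hhdef
  have hp0 : p 0 = σ a := by rw [hpdef]; simp only; rw [ht0]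
  have hpn : p n = σ b := by rw [hpdef]; simp only; rw [htn]
  have hγ0 : γ 0 = σ a := hγ.2.1
  have hγL : γ L = σ b := hγ.2.2
  have hdist : ∀ u ∈ Icc (0:ℝ) L, ∀ v ∈ Icc (0:ℝ) L, dist (γ u) (γ v) = |u - v| := hγ.1.2
  have hhub : ∀ u ∈ Icc (0:ℝ) L, h u ≤ L := by
    intro u hu
    have h1 : Metric.infDist (γ u) P ≤ dist (γ u) (p 0) :=
      Metric.infDist_le_dist_of_mem ⟨0, by simp, rfl⟩
    have h2 : dist (γ u) (p 0) = u := by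
      rw [hp0, ← hγ0, hdist u hu 0 ⟨le_refl _, hL0⟩, abs_of_nonneg (by linarith [hu.1])]
      ring
    rw [h2] at h1
    exact le_trans h1 hu.2
  set S := h '' Icc 0 L with hSdef
  have hSne : S.Nonempty := ⟨h 0, 0, ⟨le_refl _, hL0⟩, rfl⟩
  have hSbdd : BddAbove S := ⟨L, fun r ⟨u, hu, hru⟩ => hru ▸ hhub u hu⟩
  set D := sSup S with hDdef
  have hhD : ∀ u ∈ Icc (0:ℝ) L, h u ≤ D := fun u hu => le_csSup hSbdd ⟨u, hu, rfl⟩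
  have hD0 : 0 ≤ D := le_trans Metric.infDist_nonneg (hhD 0 ⟨le_refl _, hL0⟩)
  -- main bound on D
  have hDM : D + 1 ≤ M0c δ K C := by
    obtain ⟨r, hrS, hrD⟩ := exists_lt_of_lt_csSup hSne (show D - 1 < D by linarith)
    obtain ⟨u₀, hu₀, hru⟩ := hrS
    have hh0 : D - 1 < h u₀ := by rw [hru]; exact hrD
    set z₀ := γ u₀ with hz₀def
    set u₁ := max 0 (u₀ - 2*D) with hu₁def
    set u₂ := min L (u₀ + 2*D) with hu₂def
    have hu₁mem : u₁ ∈ Icc (0:ℝ) L :=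
      ⟨le_max_left _ _, max_le hL0 (by linarith [hu₀.2])⟩
    have hu₁le : u₁ ≤ u₀ := max_le hu₀.1 (by linarith)
    have hu₂mem : u₂ ∈ Icc (0:ℝ) L :=
      ⟨le_min hL0 (by linarith [hu₀.1]), min_le_left _ _⟩
    have hu₂ge : u₀ ≤ u₂ := le_min hu₀.2 (by linarith)
    have hd₁ : dist z₀ (γ u₁) ≤ 2*D := by
      rw [hdist u₀ hu₀ u₁ hu₁mem, abs_of_nonneg (by linarith)]
      have : u₀ - 2*D ≤ u₁ := le_max_right _ _
      linarith
    have hd₂ : dist z₀ (γ u₂) ≤ 2*D := by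
      rw [hdist u₀ hu₀ u₂ hu₂mem, abs_of_nonpos (by linarith)]
      have : u₂ ≤ u₀ + 2*D := min_le_right _ _
      linarith
    have hinfz : ∀ i, i ≤ n → D - 1 < dist z₀ (p i) := by
      intro i hi
      exact lt_of_lt_of_le hh0 (Metric.infDist_le_dist_of_mem ⟨i, hi, rfl⟩)
    -- choice of i₁
    have hi₁ex : ∃ i₁, i₁ ≤ n ∧ dist (γ u₁) (p i₁) < D + 1 ∧
        ∀ w : X, dist (γ u₁) w ≤ dist (γ u₁) (p i₁) → D - 1 < dist z₀ w := by
      rcases lt_or_ge (u₀ - 2*D) 0 with hcl | hcl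
      · have hu₁0 : u₁ = 0 := max_eq_left (by linarith)
        have e : γ u₁ = p 0 := by rw [hu₁0, hγ0, hp0]
        refine ⟨0, Nat.zero_le n, ?_, ?_⟩
        · rw [← e, dist_self]; linarith
        · intro w hw
          rw [← e, dist_self] at hw
          have hw0 : dist (γ u₁) w = 0 := le_antisymm hw dist_nonneg
          have : γ u₁ = w := eq_of_dist_eq_zero hw0
          rw [← this, e]
          exact hinfz 0 (Nat.zero_le n)
      · have hu₁eq : u₁ = u₀ - 2*D := max_eq_right hcl
        have h2 : Metric.infDist (γ u₁) P < D + 1 :=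
          lt_of_le_of_lt (hhD u₁ hu₁mem) (by linarith)
        obtain ⟨pt, hptP, hpt⟩ := (Metric.infDist_lt_iff hPne).1 h2
        obtain ⟨i₁, hi₁n, hpi⟩ := hptP
        refine ⟨i₁, hi₁n, by rw [hpi]; exact hpt, ?_⟩
        intro w hw
        have hdz : dist z₀ (γ u₁) = 2*D := by
          rw [hdist u₀ hu₀ u₁ hu₁mem, hu₁eq, abs_of_nonneg (by linarith)]
          ring
        have htr := dist_triangle z₀ w (γ u₁)
        rw [dist_comm w (γ u₁)] at htr
        rw [hpi] at hw
        linarith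
    obtain ⟨i₁, hi₁n, hℓ₁, hjun₁⟩ := hi₁ex
    -- choice of i₂
    have hi₂ex : ∃ i₂, i₂ ≤ n ∧ dist (p i₂) (γ u₂) < D + 1 ∧
        ∀ w : X, dist w (γ u₂) ≤ dist (p i₂) (γ u₂) → D - 1 < dist z₀ w := by
      rcases lt_or_ge L (u₀ + 2*D) with hcl | hcl
      · have hu₂L : u₂ = L := min_eq_left (by linarith)
        have e : γ u₂ = p n := by rw [hu₂L, hγL, hpn]
        refine ⟨n, le_refl n, ?_, ?_⟩
        · rw [← e, dist_self]; linarith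
        · intro w hw
          rw [← e, dist_self] at hw
          have hw0 : dist w (γ u₂) = 0 := le_antisymm hw dist_nonneg
          have : w = γ u₂ := eq_of_dist_eq_zero hw0
          rw [this, e]
          exact hinfz n (le_refl n)
      · have hu₂eq : u₂ = u₀ + 2*D := min_eq_right hcl
        have h2 : Metric.infDist (γ u₂) P < D + 1 :=
          lt_of_le_of_lt (hhD u₂ hu₂mem) (by linarith)
        obtain ⟨pt, hptP, hpt⟩ := (Metric.infDist_lt_iff hPne).1 h2
        obtain ⟨i₂, hi₂n, hpi⟩ := hptP
        refine ⟨i₂, hi₂n, by rw [hpi, dist_comm]; exact hpt, ?_⟩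
        intro w hw
        have hdz : dist z₀ (γ u₂) = 2*D := by
          rw [hdist u₀ hu₀ u₂ hu₂mem, hu₂eq, abs_of_nonpos (by linarith)]
          ring
        have htr := dist_triangle z₀ w (γ u₂)
        rw [hpi, dist_comm pt (γ u₂)] at hw
        linarith
    obtain ⟨i₂, hi₂n, hℓ₃, hjun₂⟩ := hi₂ex
    -- build the chain
    obtain ⟨g1, hg1⟩ := hX (γ u₁) (p i₁)
    obtain ⟨g3, hg3⟩ := hX (p i₂) (γ u₂)
    obtain ⟨hg1s, hg1z, hg1e, hg1d⟩ := sample_chain hg1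
    obtain ⟨hg3s, hg3z, hg3e, hg3d⟩ := sample_chain hg3
    set ℓ₁ := dist (γ u₁) (p i₁) with hl1def
    set ℓ₃ := dist (p i₂) (γ u₂) with hl3def
    set n1 := ⌈ℓ₁⌉₊ with hn1def
    set n3 := ⌈ℓ₃⌉₊ with hn3def
    set c1 : ℕ → X := fun j => g1 (min (j:ℝ) ℓ₁) with hc1def
    set c3 : ℕ → X := fun j => g3 (min (j:ℝ) ℓ₃) with hc3def
    set idx : ℕ → ℕ := fun j => if i₁ ≤ i₂ then i₁ + min j (i₂ - i₁) else i₁ - min j (i₁ - i₂)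
      with hidxdef
    set n2 := (i₂ - i₁) + (i₁ - i₂) with hn2def
    set c2 : ℕ → X := fun j => p (idx j) with hc2def
    have hidx0 : idx 0 = i₁ := by simp [hidxdef]
    have hidxn2 : idx n2 = i₂ := by
      simp only [hidxdef, hn2def]
      split_ifs with hii <;> omega
    have hidxle : ∀ j, idx j ≤ n := by
      intro j
      simp only [hidxdef]
      split_ifs <;> omega
    have hidxadj : ∀ j, idx (j+1) = idx j + 1 ∨ idx j = idx (j+1) + 1 ∨ idx j = idx (j+1) := by
      intro j
      simp only [hidxdef]
      split_ifs <;> omega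
    have hc1step : ∀ i < n1, dist (c1 i) (c1 (i+1)) ≤ K + C := by
      intro i _
      exact le_trans (hg1s i) (by linarith)
    have hc3step : ∀ i < n3, dist (c3 i) (c3 (i+1)) ≤ K + C := by
      intro i _
      exact le_trans (hg3s i) (by linarith)
    have hc2step : ∀ i < n2, dist (c2 i) (c2 (i+1)) ≤ K + C := by
      intro i _
      rcases hidxadj i with h|h|h
      · exact hstep (idx i) (idx (i+1)) (Or.inl h)
      · exact hstep (idx i) (idx (i+1)) (Or.inr (Or.inl h))
      · exact hstep (idx i) (idx (i+1)) (Or.inr (Or.inr h))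
    have hseam1 : c1 n1 = p i₁ := hg1e
    have hseam0 : c1 0 = γ u₁ := hg1z
    have hseam2 : c2 n2 = p i₂ := by rw [hc2def]; simp only; rw [hidxn2]
    have hseam2' : c2 0 = p i₁ := by rw [hc2def]; simp only; rw [hidx0]
    have hseam3 : c3 0 = p i₂ := hg3z
    have hseam3' : c3 n3 = γ u₂ := hg3e
    set Q2 : ℕ → X := catc n2 c2 c3 with hQ2def
    set q : ℕ → X := catc n1 c1 Q2 with hqdef
    set N := n1 + (n2 + n3) with hNdef
    have hQ20 : Q2 0 = p i₁ := by
      rw [hQ2def, catc_zero (by rw [hseam2, hseam3])]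
      exact hseam2'
    have hq0 : q 0 = γ u₁ := by
      rw [hqdef, catc_zero (by rw [hseam1, hQ20])]
      exact hseam0
    have hqN : q N = γ u₂ := by
      rw [hqdef, hNdef, catc_end, hQ2def, catc_end]
      exact hseam3'
    have hqstep : ∀ i < N, dist (q i) (q (i+1)) ≤ K + C := by
      rw [hqdef, hNdef]
      exact catc_step hc1step
        (catc_step hc2step hc3step (by rw [hseam2, hseam3]))
        (by rw [hseam1, hQ20])
    -- geodesic from q 0 to q N through z₀
    have hu₁₂ : u₁ ≤ u₂ := le_trans hu₁le hu₂ge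
    have hγ' := sub_geo hγ.1 hu₁mem.1 hu₁₂ hu₂mem.2
    have hγ'' : IsGeodesicFromTo (fun v => γ (u₁ + v)) (q 0) (q N) := by
      rw [hq0, hqN]; exact hγ'
    have hdq : dist (q 0) (q N) = u₂ - u₁ := by
      rw [hq0, hqN, hdist u₁ hu₁mem u₂ hu₂mem, abs_of_nonpos (by linarith)]
      ring
    have hu₀mem : u₀ - u₁ ∈ Icc (0:ℝ) (dist (q 0) (q N)) := by
      rw [hdq]
      exact ⟨by linarith, by linarith⟩
    obtain ⟨j, hjN, hdj⟩ := chain_contract hδ hX hyp (by linarith : (0:ℝ) ≤ K + C)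
      N q hqstep _ hγ'' (u₀ - u₁) hu₀mem
    have hz₀eq : γ (u₁ + (u₀ - u₁)) = z₀ := by
      rw [hz₀def]; congr 1; ring
    rw [hz₀eq] at hdj
    -- lower bound on dist z₀ (q j)
    have hlb : D - 1 < dist z₀ (q j) := by
      rw [hqdef]
      rcases catc_cases c1 Q2 j with ⟨i, hi⟩ | ⟨i', hi'⟩
      · rw [hi]
        apply hjun₁
        have := hg1d i
        rw [hc1def]
        simp only
        rw [this]
        exact min_le_right _ _
      · rw [hi', hQ2def]
        rcases catc_cases c2 c3 i' with ⟨i, hi⟩ | ⟨i, hi⟩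
        · rw [hi, hc2def]
          exact hinfz (idx i) (hidxle i)
        · rw [hi]
          apply hjun₂
          have hv : min (i:ℝ) ℓ₃ ∈ Icc (0:ℝ) ℓ₃ :=
            ⟨le_min (Nat.cast_nonneg i) dist_nonneg, min_le_right _ _⟩
        -- dist (c3 i) (γ u₂) = ℓ₃ - min i ℓ₃ ≤ ℓ₃
          have h := hg3.1.2 _ hv ℓ₃ ⟨dist_nonneg, le_refl _⟩
          rw [hg3.2.2] at h
          rw [hc3def]
          simp only
          rw [h, abs_of_nonpos (by linarith [hv.2])]
          linarith [hv.1]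
    have hDj : D - 1 < 3*δ*(Nat.clog 2 N) + (K + C) := lt_of_lt_of_le hlb hdj
    -- bound on N
    have hn1b : (n1:ℝ) < D + 2 := by
      have h1 : (n1:ℝ) < ℓ₁ + 1 := by
        rw [hn1def]; exact Nat.ceil_lt_add_one dist_nonneg
      linarith
    have hn3b : (n3:ℝ) < D + 2 := by
      have h1 : (n3:ℝ) < ℓ₃ + 1 := by
        rw [hn3def]; exact Nat.ceil_lt_add_one dist_nonneg
      linarith
    have hpp : dist (p i₁) (p i₂) ≤ 6*D + 2 := by
      have t1 := dist_triangle (p i₁) (γ u₁) (p i₂)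
      have t2 := dist_triangle (γ u₁) z₀ (p i₂)
      have t3 := dist_triangle z₀ (γ u₂) (p i₂)
      have e1 : dist (p i₁) (γ u₁) = ℓ₁ := by rw [hl1def]; exact dist_comm _ _
      have e2 : dist (γ u₁) z₀ = dist z₀ (γ u₁) := dist_comm _ _
      have e3 : dist (γ u₂) (p i₂) = ℓ₃ := by rw [hl3def]; exact dist_comm _ _
      linarith [hd₁, hd₂, hℓ₁, hℓ₃]
    have hn2b : (n2:ℝ) ≤ K*(6*D+2+C) + 1 := by
      have hn2eq : (n2:ℝ) = |(i₁:ℝ) - (i₂:ℝ)| := by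
        rcases Nat.le_total i₁ i₂ with hii | hii
        · have hc : (i₁:ℝ) ≤ (i₂:ℝ) := by exact_mod_cast hii
          have e : n2 = i₂ - i₁ := by omega
          rw [e, abs_of_nonpos (by linarith)]
          push_cast [hii]
          ring
        · have hc : (i₂:ℝ) ≤ (i₁:ℝ) := by exact_mod_cast hii
          have e : n2 = i₁ - i₂ := by omega
          rw [e, abs_of_nonneg (by linarith)]
          push_cast [hii]
          ring
      rw [hn2eq]
      have h1 := hidx i₁ i₂ hi₁n hi₂n
      have h2 := hlow i₁ i₂
      have h3 : dist (p i₁) (p i₂) + C ≤ 6*D + 2 + C := by linarith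
      have h4 := mul_le_mul_of_nonneg_left h3 (le_of_lt hK0)
      linarith
    have hNb : (N:ℝ) ≤ (8*K + K*C + 7)*(D+1) := by
      have hcast : (N:ℝ) = (n1:ℝ) + ((n2:ℝ) + (n3:ℝ)) := by push_cast [hNdef]; ring
      rw [hcast]
      linarith [hn1b, hn2b, hn3b, mul_nonneg (mul_nonneg hK0.le hC) hD0,
        mul_nonneg hK0.le hD0, mul_nonneg hK0.le hC, hD0, hK]
    -- solve for D
    set A := Real.sqrt (8*K + K*C + 7) with hAdef
    set rr := Real.sqrt (2 + K + C + 3*δ) with hrrdef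
    set s := Real.sqrt (D+1) with hsdef
    have hA0 : 0 ≤ A := Real.sqrt_nonneg _
    have hrr0 : 0 ≤ rr := Real.sqrt_nonneg _
    have hs0 : 0 ≤ s := Real.sqrt_nonneg _
    have hs2 : s^2 = D + 1 := Real.sq_sqrt (by linarith)
    have hrr2 : rr^2 = 2 + K + C + 3*δ := Real.sq_sqrt (by linarith)
    have hA2 : A^2 = 8*K + K*C + 7 :=
      Real.sq_sqrt (by linarith [mul_nonneg hK0.le hC])
    have hclogN : (Nat.clog 2 N : ℝ) ≤ A * s + 1 := by
      refine (clog_le_real_sqrt N).trans ?_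
      have h1 : Real.sqrt (N:ℝ) ≤ Real.sqrt ((8*K + K*C + 7)*(D+1)) :=
        Real.sqrt_le_sqrt hNb
      rw [Real.sqrt_mul (by linarith [mul_nonneg hK0.le hC] : (0:ℝ) ≤ 8*K + K*C + 7) _] at h1
      linarith
    have hkey : s^2 ≤ 3*δ*A*s + rr^2 := by
      rw [hs2, hrr2]
      have hm := mul_le_mul_of_nonneg_left hclogN (by linarith : (0:ℝ) ≤ 3*δ)
      linarith [hDj, hm]
    have hclaim : s ≤ 3*δ*A + rr := by
      by_contra hcon
      push_neg at hcon
      have hspos : 0 < s := lt_of_le_of_lt (by positivity) hcon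
      have h1 := mul_lt_mul_of_pos_right hcon hspos
      have h2 := mul_le_mul_of_nonneg_left (le_of_lt hcon) hrr0
      have h3 : 0 ≤ 3*δ*A*rr := by positivity
      have hsq : s*s = s^2 := by ring
      linarith [hkey]
    have : s^2 ≤ (3*δ*A + rr)^2 := pow_le_pow_left₀ hs0 hclaim 2
    rw [hs2] at this
    unfold M0c
    rw [← hAdef, ← hrrdef]
    exact this
  -- conclude
  intro u hu
  have h1 : Metric.infDist (γ u) P ≤ D := hhD u hu
  have h2 : Metric.infDist (γ u) P < D0c δ K C := by
    unfold D0c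
    linarith
  obtain ⟨pt, hptP, hd⟩ := (Metric.infDist_lt_iff hPne).1 h2
  obtain ⟨i, hin, hpi⟩ := hptP
  refine ⟨i, hin, ?_⟩
  have : σ (min (a + (i:ℝ)) b) = p i := rfl
  rw [this, hpi]
  exact le_of_lt hd

end StepA
section StepB

variable {X : Type*} [MetricSpace X] {δ : ℝ}

set_option maxHeartbeats 1000000 in
lemma stepB (hδ : 0 ≤ δ) (hX : GeodesicSpace X)
    (hyp : ∀ w x y z : X, gprod w x y ≥ min (gprod w x z) (gprod w z y) - δ)
    {K C a b : ℝ} (hK : 1 ≤ K) (hC : 0 ≤ C) (hab : a ≤ b) {σ : ℝ → X}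
    (hσ : IsQuasiGeodesicOn K C (Icc a b) σ)
    {γ : ℝ → X} (hγ : IsGeodesicFromTo γ (σ a) (σ b)) :
    ∀ s ∈ Icc a b, ∃ v ∈ Icc (0:ℝ) (dist (σ a) (σ b)),
      dist (σ s) (γ v) ≤ N0c δ K C := by
  classical
  have hK0 : (0:ℝ) < K := by linarith
  have hL0 : 0 ≤ dist (σ a) (σ b) := dist_nonneg
  set L := dist (σ a) (σ b) with hLdef
  set n := ⌈b - a⌉₊ with hndef
  set t : ℕ → ℝ := fun i => min (a + (i:ℝ)) b with htdef
  set p : ℕ → X := fun i => σ (t i) with hpdef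
  set D0 := D0c δ K C with hD0def
  have hD01 : 1 ≤ D0 := D0c_nonneg
  have htmem : ∀ i, t i ∈ Icc a b := fun i =>
    ⟨le_min (by linarith [Nat.cast_nonneg (α := ℝ) i]) hab, min_le_right _ _⟩
  have hA := stepA hδ hX hyp hK hC hab hσ hγ
  -- the w-chain on the geodesic
  set m := ⌈L⌉₊ with hmdef
  set w : ℕ → ℝ := fun k => min (k:ℝ) L with hwdef
  have hwmem : ∀ k, w k ∈ Icc (0:ℝ) L := fun k =>
    ⟨le_min (Nat.cast_nonneg k) hL0, min_le_right _ _⟩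
  have hw0 : w 0 = 0 := by
    simp only [hwdef, Nat.cast_zero]
    exact min_eq_left hL0
  have hwm : w m = L := by
    simp only [hwdef]
    exact min_eq_right (by exact_mod_cast Nat.le_ceil L)
  have hwlip : ∀ k : ℕ, |w k - w (k+1)| ≤ 1 := by
    intro k
    have h := abs_min_lip ((k:ℕ):ℝ) (((k+1:ℕ)):ℝ) L
    have e : |((k:ℕ):ℝ) - (((k+1:ℕ)):ℝ)| = 1 := by
      push_cast
      rw [show (k:ℝ) - ((k:ℝ)+1) = -1 by ring, abs_neg, abs_one]
    rw [e] at h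
    exact h
  -- choose indices
  have hι : ∀ k : ℕ, ∃ i ≤ n, dist (γ (w k)) (p i) ≤ D0 := by
    intro k
    obtain ⟨i, hi, hd⟩ := hA (w k) (hwmem k)
    exact ⟨i, hi, hd⟩
  choose ι hιn hιd using hι
  set r : ℕ → ℝ := fun k => t (ι k) with hrdef
  have hrmem : ∀ k, r k ∈ Icc a b := fun k => htmem (ι k)
  have hqg := hσ
  -- quasi-geodesic bounds
  have hlow : ∀ (s' : ℝ), s' ∈ Icc a b → ∀ (s'' : ℝ), s'' ∈ Icc a b →
      |s' - s''| ≤ K * (dist (σ s') (σ s'') + C) := by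
    intro s' hs' s'' hs''
    have h := (hσ s' hs' s'' hs'').1
    have h2 : |s' - s''|/K ≤ dist (σ s') (σ s'') + C := by linarith
    have h3 := mul_le_mul_of_nonneg_right h2 (le_of_lt hK0)
    rw [div_mul_cancel₀ _ (ne_of_gt hK0)] at h3
    linarith
  -- steps of r
  have hrstep : ∀ k, |r k - r (k+1)| ≤ K * (2*D0 + 1 + C) := by
    intro k
    have h1 := hιd k
    have h2 := hιd (k+1)
    have h3 : dist (γ (w k)) (γ (w (k+1))) = |w k - w (k+1)| :=
      hγ.1.2 _ (hwmem k) _ (hwmem (k+1))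
    have h4 : dist (p (ι k)) (p (ι (k+1))) ≤ 2*D0 + 1 := by
      have t1 := dist_triangle (p (ι k)) (γ (w k)) (p (ι (k+1)))
      have t2 := dist_triangle (γ (w k)) (γ (w (k+1))) (p (ι (k+1)))
      have e1 : dist (p (ι k)) (γ (w k)) = dist (γ (w k)) (p (ι k)) := dist_comm _ _
      have e2 : dist (γ (w (k+1))) (p (ι (k+1))) = dist (γ (w (k+1))) (p (ι (k+1))) := rfl
      rw [h3] at t2
      linarith [hwlip k]
    have h5 := hlow (t (ι k)) (htmem _) (t (ι (k+1))) (htmem _)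
    have h6 : K * (dist (σ (t (ι k))) (σ (t (ι (k+1)))) + C) ≤ K * (2*D0 + 1 + C) := by
      apply mul_le_mul_of_nonneg_left _ (le_of_lt hK0)
      have : dist (σ (t (ι k))) (σ (t (ι (k+1)))) = dist (p (ι k)) (p (ι (k+1))) := rfl
      rw [this]
      linarith
    exact le_trans h5 h6
  -- endpoint slack
  have hslack0 : r 0 - a ≤ K * (D0 + C) := by
    have h1 := hιd 0
    rw [hw0, hγ.2.1] at h1
    have h2 := hlow a ⟨le_refl _, hab⟩ (t (ι 0)) (htmem _)
    have h3 : dist (σ a) (σ (t (ι 0))) ≤ D0 := by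
      rw [show σ (t (ι 0)) = p (ι 0) from rfl]
      exact h1
    have h4 : r 0 - a ≤ |a - t (ι 0)| := by
      rw [hrdef, abs_sub_comm]
      exact le_abs_self _
    have h5 : K * (dist (σ a) (σ (t (ι 0))) + C) ≤ K * (D0 + C) :=
      mul_le_mul_of_nonneg_left (by linarith) (le_of_lt hK0)
    linarith
  have hslackm : b - r m ≤ K * (D0 + C) := by
    have h1 := hιd m
    rw [hwm, hγ.2.2] at h1
    have h2 := hlow b ⟨hab, le_refl _⟩ (t (ι m)) (htmem _)
    have h3 : dist (σ b) (σ (t (ι m))) ≤ D0 := by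
      rw [show σ (t (ι m)) = p (ι m) from rfl]
      exact h1
    have h4 : b - r m ≤ |b - t (ι m)| := le_abs_self _
    have h5 : K * (dist (σ b) (σ (t (ι m))) + C) ≤ K * (D0 + C) :=
      mul_le_mul_of_nonneg_left (by linarith) (le_of_lt hK0)
    linarith
  -- main: given s, find k with |s - r k| small
  intro s hs
  have hSL : ∃ k, |s - r k| ≤ K * (2*D0 + 1 + C) + K * (D0 + C) := by
    rcases lt_or_ge s (r 0) with hcase | hcase
    · refine ⟨0, ?_⟩
      rw [abs_of_nonpos (by linarith)]
      have := (hrmem 0).1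
      have hKD : 0 ≤ K * (2*D0+1+C) := by positivity
      have : r 0 - s ≤ r 0 - a := by linarith [hs.1]
      linarith [hslack0]
    · set k₀ := Nat.findGreatest (fun k => r k ≤ s) m with hk₀def
      have hk₀m : k₀ ≤ m := Nat.findGreatest_le m
      have hP : r k₀ ≤ s := by
        have h := Nat.findGreatest_spec (P := fun k => r k ≤ s) (m := 0) (n := m)
          (Nat.zero_le m) hcase
        rw [hk₀def]
        exact h
      refine ⟨k₀, ?_⟩
      rw [abs_of_nonneg (by linarith)]
      rcases Nat.eq_or_lt_of_le hk₀m with hk | hk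
      · have : b - r m ≤ K*(D0+C) := hslackm
        have hKD : 0 ≤ K * (2*D0+1+C) := by positivity
        rw [← hk] at this
        linarith [hs.2]
      · have hnot : ¬ (r (k₀+1) ≤ s) :=
          Nat.findGreatest_is_greatest (Nat.lt_succ_self k₀) hk
        push_neg at hnot
        have h1 := hrstep k₀
        have h2 : r (k₀+1) - r k₀ ≤ |r k₀ - r (k₀+1)| := by
          rw [abs_sub_comm]
          exact le_abs_self _
        have hKD : 0 ≤ K * (D0+C) := by positivity
        linarith
  obtain ⟨k, hk⟩ := hSL
  refine ⟨w k, hwmem k, ?_⟩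
  have h1 := dist_triangle (σ s) (σ (r k)) (γ (w k))
  have h2 : dist (σ s) (σ (r k)) ≤ K * |s - r k| + C := by
    have := (hσ s hs (r k) (hrmem k)).2
    linarith
  have h3 : dist (σ (r k)) (γ (w k)) ≤ D0 := by
    rw [show σ (r k) = p (ι k) from rfl, dist_comm]
    exact hιd k
  have h4 : K * |s - r k| ≤ K * (K * (2*D0 + 1 + C) + K * (D0 + C)) :=
    mul_le_mul_of_nonneg_left hk (le_of_lt hK0)
  have hN0 : N0c δ K C = K*K*(3*D0 + 1 + 2*C) + C + D0 := by
    rw [hD0def]; unfold N0c; ring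
  rw [hN0]
  have hexp : K * (K * (2*D0 + 1 + C) + K * (D0 + C)) = K*K*(3*D0 + 1 + 2*C) := by ring
  rw [hexp] at h4
  linarith
end StepB
section MorseMain

variable {X : Type*} [MetricSpace X] {δ : ℝ}

lemma geo_morse (hδ : 0 ≤ δ) (hX : GeodesicSpace X)
    (hyp : ∀ w x y z : X, gprod w x y ≥ min (gprod w x z) (gprod w z y) - δ)
    {γ : ℝ → X} {L : ℝ} (hγ : IsGeodesicSeg γ L) :
    IsMorseSet (fun K C => N0c δ K C) (γ '' Icc 0 L) := by
  intro K C hK hC a b hab σ hσ hsa hsb s hs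
  obtain ⟨s₀, hs₀, he₀⟩ := hsa
  obtain ⟨t₀, ht₀, he₁⟩ := hsb
  rcases le_total s₀ t₀ with hst | hst
  · have hγ' := sub_geo hγ hs₀.1 hst ht₀.2
    rw [he₀, he₁] at hγ'
    obtain ⟨v, hv, hdv⟩ := stepB hδ hX hyp hK hC hab hσ hγ' s hs
    refine ⟨γ (s₀ + v), ⟨s₀ + v, ?_, rfl⟩, hdv⟩
    have hd : dist (σ a) (σ b) = t₀ - s₀ := by
      rw [← he₀, ← he₁, hγ.2 s₀ hs₀ t₀ ht₀, abs_of_nonpos (by linarith)]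
      ring
    rw [hd] at hv
    exact ⟨by linarith [hs₀.1, hv.1], by linarith [hv.2, ht₀.2]⟩
  · have hγ' := sub_geo_rev hγ ht₀.1 hst hs₀.2
    rw [he₀, he₁] at hγ'
    obtain ⟨v, hv, hdv⟩ := stepB hδ hX hyp hK hC hab hσ hγ' s hs
    refine ⟨γ (s₀ - v), ⟨s₀ - v, ?_, rfl⟩, hdv⟩
    have hd : dist (σ a) (σ b) = s₀ - t₀ := by
      rw [← he₀, ← he₁, hγ.2 s₀ hs₀ t₀ ht₀, abs_of_nonneg (by linarith)]
    rw [hd] at hv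
    exact ⟨by linarith [ht₀.1, hv.2], by linarith [hv.1, hs₀.2]⟩

lemma stratum_univ (hδ : 0 ≤ δ) (hX : GeodesicSpace X)
    (hyp : ∀ w x y z : X, gprod w x y ≥ min (gprod w x z) (gprod w z y) - δ)
    (e : X) {N : ℝ → ℝ → ℝ} (hmono : ∀ K C : ℝ, N0c δ K C ≤ N K C) :
    morseStratum N e = Set.univ := by
  ext y
  simp only [Set.mem_univ, iff_true]
  obtain ⟨γ, hγ⟩ := hX e y
  refine ⟨γ, hγ, ?_⟩
  intro K C hK hC a b hab σ hσ hsa hsb s hs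
  obtain ⟨g, hg, hd⟩ := geo_morse hδ hX hyp hγ.1 K C hK hC a b hab σ hσ hsa hsb s hs
  exact ⟨g, hg, le_trans hd (hmono K C)⟩

end MorseMain
section Bdry

variable {X : Type*} [MetricSpace X] {δ : ℝ} {e : X}

lemma pair_tendsto_iff {f : ℕ × ℕ → ℝ} :
    Tendsto f atTop atTop ↔ ∀ M : ℝ, ∃ N : ℕ, ∀ i j, N ≤ i → N ≤ j → M ≤ f (i, j) := by
  rw [Filter.tendsto_atTop_atTop]
  constructor
  · intro h M
    obtain ⟨N, hN⟩ := h M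
    exact ⟨max N.1 N.2, fun i j hi hj =>
      hN (i, j) ⟨le_trans (le_max_left _ _) hi, le_trans (le_max_right _ _) hj⟩⟩
  · intro h M
    obtain ⟨N, hN⟩ := h M
    exact ⟨(N, N), fun a ha => hN a.1 a.2 ha.1 ha.2⟩

lemma equiv_symm {f g : ℕ → X} (h : EquivAtInf e f g) : EquivAtInf e g f := by
  rw [EquivAtInf, pair_tendsto_iff] at h ⊢
  intro M
  obtain ⟨N, hN⟩ := h M
  exact ⟨N, fun i j hi hj => by rw [gprod_comm']; exact hN j i hj hi⟩

lemma equiv_trans (hδ : 0 ≤ δ)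
    (hyp : ∀ w x y z : X, gprod w x y ≥ min (gprod w x z) (gprod w z y) - δ)
    {f g h : ℕ → X} (h1 : EquivAtInf e f g) (h2 : EquivAtInf e g h) :
    EquivAtInf e f h := by
  rw [EquivAtInf, pair_tendsto_iff] at h1 h2 ⊢
  intro M
  obtain ⟨N1, hN1⟩ := h1 (M + δ)
  obtain ⟨N2, hN2⟩ := h2 (M + δ)
  refine ⟨max N1 N2, fun i j hi hj => ?_⟩
  have ha := hN1 i (max N1 N2) (le_trans (le_max_left _ _) hi) (le_max_left _ _)
  have hb := hN2 (max N1 N2) j (le_max_right _ _) (le_trans (le_max_right _ _) hj)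
  have hc := hyp e (f i) (h j) (g (max N1 N2))
  have hd2 := le_min ha hb
  linarith [hc, hd2]

lemma bseq_equiv (hδ : 0 ≤ δ)
    (hyp : ∀ w x y z : X, gprod w x y ≥ min (gprod w x z) (gprod w z y) - δ)
    (S : Set X) :
    Equivalence (fun f g : BSeq S e => EquivAtInf e f.1 g.1) :=
  ⟨fun f => f.2.2, fun h => equiv_symm h, fun h1 h2 => equiv_trans hδ hyp h1 h2⟩

lemma mk_eq_iff (hδ : 0 ≤ δ)
    (hyp : ∀ w x y z : X, gprod w x y ≥ min (gprod w x z) (gprod w z y) - δ)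
    {S : Set X} {f g : BSeq S e} :
    SeqBoundary.mk f = SeqBoundary.mk g ↔ EquivAtInf e f.1 g.1 := by
  unfold SeqBoundary.mk
  exact Quot.eq.trans (Equivalence.eqvGen_iff (bseq_equiv hδ hyp S))

lemma seqGP_nonneg (f g : ℕ → X) : (0:EReal) ≤ seqGP e f g := by
  refine Filter.le_liminf_of_le (by isBoundedDefault) ?_
  exact Filter.Eventually.of_forall (fun (p : ℕ × ℕ) => by
    have h := gprod_nonneg' e (f p.1) (g p.2)
    exact_mod_cast h)

lemma seqGP_mono (hδ : 0 ≤ δ)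
    (hyp : ∀ w x y z : X, gprod w x y ≥ min (gprod w x z) (gprod w z y) - δ)
    {f g f' g' : ℕ → X} (hf : EquivAtInf e f f') (hg : EquivAtInf e g g') :
    ∀ c : ℝ, (c : EReal) < seqGP e f g → ((c - 2*δ : ℝ) : EReal) ≤ seqGP e f' g' := by
  intro c hc
  have hev : ∀ᶠ p : ℕ × ℕ in atTop, (c:EReal) < ((gprod e (f p.1) (g p.2) : ℝ) : EReal) :=
    Filter.eventually_lt_of_lt_liminf hc
  obtain ⟨P0, hP0⟩ := Filter.eventually_atTop.1 hev
  rw [EquivAtInf, pair_tendsto_iff] at hf hg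
  obtain ⟨N1, hN1⟩ := hf c
  obtain ⟨N2, hN2⟩ := hg c
  set k := max (max P0.1 P0.2) (max N1 N2) with hkdef
  have hkc : (c:EReal) < ((gprod e (f k) (g k) : ℝ) : EReal) :=
    hP0 (k, k) ⟨le_trans (le_max_left _ _) (le_max_left _ _),
      le_trans (le_max_right _ _) (le_max_left _ _)⟩
  have hkc' : c < gprod e (f k) (g k) := by exact_mod_cast hkc
  refine Filter.le_liminf_of_le (by isBoundedDefault) ?_
  apply Filter.eventually_atTop.2
  refine ⟨(N1, N2), fun p hp => ?_⟩
  have hi : N1 ≤ p.1 := hp.1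
  have hj : N2 ≤ p.2 := hp.2
  have ha : c ≤ gprod e (f k) (f' p.1) :=
    hN1 k p.1 (le_trans (le_max_left _ _) (le_max_right _ _)) hi
  have ha' : c ≤ gprod e (f' p.1) (f k) := by rw [gprod_comm']; exact ha
  have hb : c ≤ gprod e (g k) (g' p.2) :=
    hN2 k p.2 (le_trans (le_max_right _ _) (le_max_right _ _)) hj
  have h1 := hyp e (f k) (g' p.2) (g k)
  have h2 := hyp e (f' p.1) (g' p.2) (f k)
  have h3 : min (gprod e (f k) (g k)) (gprod e (g k) (g' p.2)) ≥ c := le_min (le_of_lt hkc') hb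
  have h4 : gprod e (f k) (g' p.2) ≥ c - δ := by linarith
  have h5 : min (gprod e (f' p.1) (f k)) (gprod e (f k) (g' p.2)) ≥ c - δ :=
    le_min (by linarith) h4
  have h6 : gprod e (f' p.1) (g' p.2) ≥ c - 2*δ := by linarith
  exact_mod_cast h6

lemma ereal_le_of_real_lt {a b : EReal} (h : ∀ c : ℝ, (c:EReal) < a → (c:EReal) ≤ b) :
    a ≤ b := by
  by_contra hc
  push_neg at hc
  obtain ⟨c, hbc, hca⟩ := EReal.exists_between_coe_real hc
  exact absurd (h c hca) (not_le.2 hbc)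

lemma seqGP_le (hδ : 0 ≤ δ)
    (hyp : ∀ w x y z : X, gprod w x y ≥ min (gprod w x z) (gprod w z y) - δ)
    {f g f' g' : ℕ → X} (hf : EquivAtInf e f f') (hg : EquivAtInf e g g') :
    seqGP e f g ≤ seqGP e f' g' + ((2*δ : ℝ) : EReal) := by
  apply ereal_le_of_real_lt
  intro c hc
  have h1 := seqGP_mono hδ hyp hf hg c hc
  calc (c : EReal) = ((c - 2*δ : ℝ) : EReal) + ((2*δ : ℝ) : EReal) := by
        rw [← EReal.coe_add]; norm_num
    _ ≤ seqGP e f' g' + ((2*δ : ℝ) : EReal) := add_le_add_left h1 _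

lemma bGP_mem {S : Set X} (f g : BSeq S e) :
    seqGP e f.1 g.1 ≤ bGP S e (SeqBoundary.mk f) (SeqBoundary.mk g) :=
  le_sSup ⟨f, g, rfl, rfl, rfl⟩

lemma bGP_le (hδ : 0 ≤ δ)
    (hyp : ∀ w x y z : X, gprod w x y ≥ min (gprod w x z) (gprod w z y) - δ)
    {S : Set X} (f g : BSeq S e) :
    bGP S e (SeqBoundary.mk f) (SeqBoundary.mk g) ≤ seqGP e f.1 g.1 + ((2*δ:ℝ):EReal) := by
  apply sSup_le
  rintro r ⟨f', g', hf', hg', rfl⟩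
  have h1 : EquivAtInf e f'.1 f.1 := (mk_eq_iff hδ hyp).1 hf'
  have h2 : EquivAtInf e g'.1 g.1 := (mk_eq_iff hδ hyp).1 hg'
  exact seqGP_le hδ hyp h1 h2

end Bdry

set_option maxHeartbeats 2000000 in
/-- in a δ-hyperbolic geodesic space there is a gauge `N₀`
(depending only on δ) such that all geodesics are `N₀`-Morse, `X^(N)_e = X`
for `N ≥ N₀`, and the natural maps `∂X^(N)_e → ∂∞X` are quasi-symmetries onto
their images, surjective for `N ≥ N₀`. -/
theorem statement8 (δ : ℝ) (hδ : 0 ≤ δ) :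
    ∃ N₀ : ℝ → ℝ → ℝ, IsMorseGauge N₀ ∧
      ∀ (X : Type*) [MetricSpace X], GeodesicSpace X →
        (∀ w x y z : X, gprod w x y ≥ min (gprod w x z) (gprod w z y) - δ) →
        ∀ e : X,
          (∀ (γ : ℝ → X) (L : ℝ), IsGeodesicSeg γ L →
            IsMorseSet N₀ (γ '' Icc 0 L)) ∧
          (∀ N : ℝ → ℝ → ℝ, IsMorseGauge N → (∀ K C : ℝ, N₀ K C ≤ N K C) →
            morseStratum N e = Set.univ) ∧
          (∀ N : ℝ → ℝ → ℝ, IsMorseGauge N →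
            ∃ J : SeqBoundary (morseStratum N e) e →
                SeqBoundary (Set.univ : Set X) e,
              (∀ (u : BSeq (morseStratum N e) e)
                  (v : BSeq (Set.univ : Set X) e),
                  (∀ n, v.1 n = u.1 n) →
                  J (SeqBoundary.mk u) = SeqBoundary.mk v) ∧
              Function.Injective J ∧
              (∀ d d', IsVisualMetric (morseStratum N e) e d →
                IsVisualMetric (Set.univ : Set X) e d' →
                IsQuasiSymmetryOnto d d' J) ∧
              ((∀ K C : ℝ, N₀ K C ≤ N K C) → Function.Surjective J)) := by
  classical
  refine ⟨fun K C => N0c δ K C, fun K C hK hC => N0c_nonneg hK hC, ?_⟩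
  intro X _ hX hyp e
  refine ⟨fun γ L hγ => geo_morse hδ hX hyp hγ,
    fun N hN hmono => stratum_univ hδ hX hyp e hmono, ?_⟩
  intro N hN
  set S := morseStratum N e with hSdef
  let lift : BSeq S e → BSeq (Set.univ : Set X) e :=
    fun f => ⟨f.1, fun n => Set.mem_univ _, f.2.2⟩
  let J : SeqBoundary S e → SeqBoundary (Set.univ : Set X) e :=
    Quot.lift (fun f => SeqBoundary.mk (lift f)) (fun f g hfg => Quot.sound hfg)
  have hJmk : ∀ f : BSeq S e, J (SeqBoundary.mk f) = SeqBoundary.mk (lift f) :=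
    fun f => rfl
  have hprop1 : ∀ (u : BSeq S e) (v : BSeq (Set.univ : Set X) e),
      (∀ n, v.1 n = u.1 n) → J (SeqBoundary.mk u) = SeqBoundary.mk v := by
    intro u v hv
    have hvu : v = lift u := Subtype.ext (funext fun n => hv n)
    rw [hJmk, hvu]
  have hinj : Function.Injective J := by
    intro ξ η hJξη
    obtain ⟨u, hu⟩ := Quot.exists_rep ξ
    obtain ⟨v, hv⟩ := Quot.exists_rep η
    rw [← hu, ← hv] at hJξη ⊢
    have h1 : SeqBoundary.mk (lift u) = SeqBoundary.mk (lift v) := hJξη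
    have h2 : EquivAtInf e (lift u).1 (lift v).1 := (mk_eq_iff hδ hyp).1 h1
    exact Quot.sound h2
  refine ⟨J, hprop1, hinj, ?_, ?_⟩
  · -- quasi-symmetry
    intro d d' hd hd'
    obtain ⟨hd0, hdsym, hdtri, hdeq, ε, hε, k₁, hk₁, k₂, hk₂, hcomp⟩ := hd
    obtain ⟨hd0', hdsym', hdtri', hdeq', ε', hε', k₁', hk₁', k₂', hk₂', hcomp'⟩ := hd'
    have key : ∀ ξ η : SeqBoundary S e, ξ ≠ η →
        ∃ bS bU : ℝ, |bS - bU| ≤ 2*δ ∧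
          k₁ * Real.exp (-ε*bS) ≤ d ξ η ∧ d ξ η ≤ k₂ * Real.exp (-ε*bS) ∧
          k₁' * Real.exp (-ε'*bU) ≤ d' (J ξ) (J η) ∧
          d' (J ξ) (J η) ≤ k₂' * Real.exp (-ε'*bU) := by
      intro ξ η hne
      obtain ⟨f, hfξ⟩ := Quot.exists_rep ξ
      obtain ⟨g, hgη⟩ := Quot.exists_rep η
      have hfξ' : SeqBoundary.mk f = ξ := hfξ
      have hgη' : SeqBoundary.mk g = η := hgη
      set s := seqGP e f.1 g.1 with hsdef
      have hs0 : (0:EReal) ≤ s := seqGP_nonneg _ _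
      have hbS1 : s ≤ bGP S e ξ η := by rw [← hfξ', ← hgη']; exact bGP_mem f g
      have hbS2 : bGP S e ξ η ≤ s + ((2*δ:ℝ):EReal) := by
        rw [← hfξ', ← hgη']; exact bGP_le hδ hyp f g
      have hJξ : J ξ = SeqBoundary.mk (lift f) := by rw [← hfξ']; rfl
      have hJη : J η = SeqBoundary.mk (lift g) := by rw [← hgη']; rfl
      have hbU1 : s ≤ bGP Set.univ e (J ξ) (J η) := by
        rw [hJξ, hJη]; exact bGP_mem (lift f) (lift g)
      have hbU2 : bGP Set.univ e (J ξ) (J η) ≤ s + ((2*δ:ℝ):EReal) := by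
        rw [hJξ, hJη]; exact bGP_le hδ hyp (lift f) (lift g)
      have hdpos : 0 < d ξ η := by
        rcases lt_or_eq_of_le (hd0 ξ η) with h | h
        · exact h
        · exact absurd ((hdeq ξ η).1 h.symm) hne
      have hbSne : bGP S e ξ η ≠ ⊤ := by
        intro htop
        have h2 := (hcomp ξ η).2
        rw [htop] at h2
        rw [show visGauge ε (⊤:EReal) = 0 from by simp [visGauge], mul_zero] at h2
        linarith
      have hsne_top : s ≠ ⊤ := by
        intro h
        apply hbSne
        apply top_le_iff.1
        rw [← h]
        exact hbS1
      have hsne_bot : s ≠ ⊥ := by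
        intro h
        rw [h] at hs0
        exact absurd hs0 (by simp)
      have h2δt : ((2*δ:ℝ):EReal) ≠ ⊤ := EReal.coe_ne_top _
      have hs2δne : s + ((2*δ:ℝ):EReal) ≠ ⊤ := (EReal.add_lt_top hsne_top h2δt).ne
      have hbSne_bot : bGP S e ξ η ≠ ⊥ := by
        intro h
        rw [h] at hbS1
        exact hsne_bot (le_bot_iff.1 hbS1)
      have hbUne : bGP Set.univ e (J ξ) (J η) ≠ ⊤ := ne_top_of_le_ne_top hs2δne hbU2
      have hbUne_bot : bGP Set.univ e (J ξ) (J η) ≠ ⊥ := by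
        intro h
        rw [h] at hbU1
        exact hsne_bot (le_bot_iff.1 hbU1)
      have htoR : (s + ((2*δ:ℝ):EReal)).toReal = s.toReal + 2*δ := by
        rw [EReal.toReal_add hsne_top hsne_bot h2δt (EReal.coe_ne_bot _), EReal.toReal_coe]
      refine ⟨(bGP S e ξ η).toReal, (bGP Set.univ e (J ξ) (J η)).toReal, ?_, ?_, ?_, ?_, ?_⟩
      · have l1 : s.toReal ≤ (bGP S e ξ η).toReal :=
          EReal.toReal_le_toReal hbS1 hsne_bot hbSne
        have l2 : (bGP S e ξ η).toReal ≤ s.toReal + 2*δ := by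
          have h := EReal.toReal_le_toReal hbS2 hbSne_bot hs2δne
          rwa [htoR] at h
        have l3 : s.toReal ≤ (bGP Set.univ e (J ξ) (J η)).toReal :=
          EReal.toReal_le_toReal hbU1 hsne_bot hbUne
        have l4 : (bGP Set.univ e (J ξ) (J η)).toReal ≤ s.toReal + 2*δ := by
          have h := EReal.toReal_le_toReal hbU2 hbUne_bot hs2δne
          rwa [htoR] at h
        rw [abs_le]
        constructor <;> linarith
      · have h := (hcomp ξ η).1
        rwa [show visGauge ε (bGP S e ξ η) = Real.exp (-ε * (bGP S e ξ η).toReal) by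
          simp only [visGauge, if_neg hbSne]] at h
      · have h := (hcomp ξ η).2
        rwa [show visGauge ε (bGP S e ξ η) = Real.exp (-ε * (bGP S e ξ η).toReal) by
          simp only [visGauge, if_neg hbSne]] at h
      · have h := (hcomp' (J ξ) (J η)).1
        rwa [show visGauge ε' (bGP Set.univ e (J ξ) (J η)) =
            Real.exp (-ε' * (bGP Set.univ e (J ξ) (J η)).toReal) by
          simp only [visGauge, if_neg hbUne]] at h
      · have h := (hcomp' (J ξ) (J η)).2
        rwa [show visGauge ε' (bGP Set.univ e (J ξ) (J η)) =
            Real.exp (-ε' * (bGP Set.univ e (J ξ) (J η)).toReal) by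
          simp only [visGauge, if_neg hbUne]] at h
    -- build the homeomorphism
    set p := ε'/ε with hpdef
    have hp : 0 < p := div_pos hε' hε
    set Λ := (k₂'/k₁') * Real.exp (4*ε'*δ) * (k₂/k₁)^p with hΛdef
    have hrp : 0 < (k₂/k₁)^p := Real.rpow_pos_of_pos (by positivity) _
    have hΛ : 0 < Λ := by
      rw [hΛdef]
      positivity
    refine ⟨hinj, fun t => Λ * t^p, ⟨?_, ?_, ?_, ?_, ?_⟩, ?_⟩
    · intro t _
      exact (continuousAt_const.mul
        (Real.continuousAt_rpow_const t p (Or.inr hp.le))).continuousWithinAt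
    · intro x hx y _ hxy
      exact mul_lt_mul_of_pos_left (Real.rpow_lt_rpow hx hxy hp) hΛ
    · simp [Real.zero_rpow (ne_of_gt hp)]
    · exact (tendsto_rpow_atTop hp).const_mul_atTop hΛ
    · intro t ht
      exact mul_nonneg hΛ.le (Real.rpow_nonneg ht _)
    · intro x y z hxy hxz _
      obtain ⟨b1, c1, h1d, h1l, h1u, h1l', h1u'⟩ := key x y hxy
      obtain ⟨b2, c2, h2d, h2l, h2u, h2l', h2u'⟩ := key x z hxz
      have hdxz : 0 < d x z := lt_of_lt_of_le (by positivity) h2l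
      have hdxy : 0 < d x y := lt_of_lt_of_le (by positivity) h1l
      have hd'xz : 0 < d' (J x) (J z) := lt_of_lt_of_le (by positivity) h2l'
      have step1 : d' (J x) (J y) / d' (J x) (J z) ≤
          (k₂' * Real.exp (-ε'*c1)) / (k₁' * Real.exp (-ε'*c2)) :=
        div_le_div₀ (by positivity) h1u' (by positivity) h2l'
      have step2 : (k₂' * Real.exp (-ε'*c1)) / (k₁' * Real.exp (-ε'*c2)) =
          (k₂'/k₁') * Real.exp (ε'*(c2 - c1)) := by
        rw [mul_div_mul_comm, ← Real.exp_sub]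
        congr 2
        ring
      have step3 : Real.exp (ε'*(c2-c1)) ≤
          Real.exp (4*ε'*δ) * Real.exp (ε'*(b2-b1)) := by
        rw [← Real.exp_add]
        apply Real.exp_le_exp.2
        have a1 := abs_le.1 h1d
        have a2 := abs_le.1 h2d
        have hb : (c2 - c1) - (b2 - b1) ≤ 4*δ := by linarith [a1.1, a1.2, a2.1, a2.2]
        have hm := mul_le_mul_of_nonneg_left hb hε'.le
        linarith [hm]
      have step4 : Real.exp (ε'*(b2-b1)) = (Real.exp (ε*(b2-b1)))^p := by
        rw [Real.rpow_def_of_pos (Real.exp_pos _), Real.log_exp]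
        congr 1
        rw [hpdef]
        field_simp
      have step5 : Real.exp (ε*(b2-b1)) ≤ (k₂/k₁) * (d x y / d x z) := by
        have n1 : Real.exp (-ε*b1) ≤ d x y / k₁ := (le_div_iff₀ hk₁).2 (by linarith)
        have n2 : d x z / k₂ ≤ Real.exp (-ε*b2) := (div_le_iff₀ hk₂).2 (by linarith)
        have n3 : Real.exp (ε*(b2-b1)) = Real.exp (-ε*b1) / Real.exp (-ε*b2) := by
          rw [← Real.exp_sub]
          congr 1
          ring
        have n4 : Real.exp (-ε*b1) / Real.exp (-ε*b2) ≤ (d x y/k₁)/(d x z/k₂) :=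
          div_le_div₀ (by positivity) n1 (by positivity) n2
        have n5 : (d x y/k₁)/(d x z/k₂) = (k₂/k₁) * (d x y / d x z) := by
          field_simp
        rw [n3, ← n5]
        exact n4
      have step6 : (Real.exp (ε*(b2-b1)))^p ≤ ((k₂/k₁) * (d x y/d x z))^p :=
        Real.rpow_le_rpow (Real.exp_pos _).le step5 hp.le
      have step7 : ((k₂/k₁) * (d x y/d x z))^p = (k₂/k₁)^p * (d x y/d x z)^p :=
        Real.mul_rpow (by positivity) (by positivity)
      show d' (J x) (J y) / d' (J x) (J z) ≤ Λ * (d x y / d x z)^p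
      calc d' (J x) (J y) / d' (J x) (J z)
          ≤ (k₂'/k₁') * Real.exp (ε'*(c2 - c1)) := by rw [← step2]; exact step1
        _ ≤ (k₂'/k₁') * (Real.exp (4*ε'*δ) * Real.exp (ε'*(b2-b1))) :=
            mul_le_mul_of_nonneg_left step3 (by positivity)
        _ = (k₂'/k₁') * Real.exp (4*ε'*δ) * ((Real.exp (ε*(b2-b1)))^p) := by
            rw [← step4]; ring
        _ ≤ (k₂'/k₁') * Real.exp (4*ε'*δ) * ((k₂/k₁)^p * (d x y/d x z)^p) := by
            apply mul_le_mul_of_nonneg_left _ (by positivity)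
            rw [← step7]
            exact step6
        _ = Λ * (d x y / d x z)^p := by rw [hΛdef]; ring
  · -- surjectivity
    intro hge ζ
    have hSuniv : morseStratum N e = Set.univ := stratum_univ hδ hX hyp e hge
    obtain ⟨v, hv⟩ := Quot.exists_rep ζ
    refine ⟨SeqBoundary.mk ⟨v.1, fun n => by rw [hSdef, hSuniv]; trivial, v.2.2⟩, ?_⟩
    rw [← hv]
    exact hprop1 _ v (fun n => rfl)
end

section
/- Let X be a geodesic metric space, e ∈ X, and N a Morse gauge. Let ℓ₁, ℓ₂ : [0,∞) → X be N-Morse geodesic rays with ℓ₁(0) = ℓ₂(0) = e, and suppose the sequences (ℓ₁(n)) and (ℓ₂(n)) are equivalent, i.e. (ℓ₁(i)·ℓ₂(j))_e → ∞ as i,j → ∞. Then the Hausdorff distance between the images of ℓ₁ and ℓ₂ is at most 28N(3,0). -/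
open Set Filter

/-- Concatenation of a geodesic `δ` from `e` to a point minimizing the distance
to `e` along another geodesic `ω`, followed by `ω`, is a `(3,0)`-quasi-geodesic. -/
lemma concat_qg {X : Type*} [MetricSpace X] (e : X) (δ ω σ : ℝ → X) (m R : ℝ)
    (hm : 0 ≤ m) (hR : 0 ≤ R)
    (hδ : ∀ u ∈ Icc (0:ℝ) m, ∀ v ∈ Icc (0:ℝ) m, dist (δ u) (δ v) = |u - v|)
    (hδ0 : δ 0 = e)
    (hω : ∀ u ∈ Icc (0:ℝ) R, ∀ v ∈ Icc (0:ℝ) R, dist (ω u) (ω v) = |u - v|)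
    (hω0 : ω 0 = δ m)
    (hmin : ∀ v ∈ Icc (0:ℝ) R, m ≤ dist e (ω v))
    (hσl : ∀ t ∈ Icc (0:ℝ) m, σ t = δ t)
    (hσr : ∀ t ∈ Icc (0:ℝ) (m + R), m < t → σ t = ω (t - m)) :
    IsQuasiGeodesicOn 3 0 (Icc 0 (m + R)) σ := by
  have dist_eδ : ∀ u ∈ Icc (0:ℝ) m, dist e (δ u) = u := by
    intro u hu
    rw [← hδ0, hδ 0 ⟨le_rfl, hm⟩ u hu, abs_of_nonpos (by linarith [hu.1])]
    ring
  have main : ∀ s ∈ Icc (0:ℝ) (m + R), ∀ t ∈ Icc (0:ℝ) (m + R), s ≤ t →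
      |s - t| / 3 - 0 ≤ dist (σ s) (σ t) ∧ dist (σ s) (σ t) ≤ 3 * |s - t| + 0 := by
    intro s hs t ht hst
    have habs : |s - t| = t - s := by
      rw [abs_sub_comm, abs_of_nonneg (by linarith)]
    by_cases htm : t ≤ m
    · have hsm : s ≤ m := le_trans hst htm
      rw [hσl s ⟨hs.1, hsm⟩, hσl t ⟨ht.1, htm⟩, hδ s ⟨hs.1, hsm⟩ t ⟨ht.1, htm⟩, habs]
      constructor <;> linarith
    · push_neg at htm
      have htIcc : t - m ∈ Icc (0:ℝ) R := ⟨by linarith, by linarith [ht.2]⟩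
      by_cases hsm : s ≤ m
      · -- cross pairs
        rw [hσl s ⟨hs.1, hsm⟩, hσr t ht htm]
        have hup : dist (δ s) (ω (t - m)) ≤ t - s := by
          have h3 := dist_triangle (δ s) (δ m) (ω (t - m))
          have h4 : dist (δ s) (δ m) = m - s := by
            rw [hδ s ⟨hs.1, hsm⟩ m ⟨hm, le_rfl⟩, abs_of_nonpos (by linarith)]; ring
          have h5 : dist (δ m) (ω (t - m)) = t - m := by
            rw [← hω0, hω 0 ⟨le_rfl, hR⟩ (t - m) htIcc,
              abs_of_nonpos (by linarith [htIcc.1])]; ring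
          linarith
        have hlow1 : m - s ≤ dist (δ s) (ω (t - m)) := by
          have h3 := hmin (t - m) htIcc
          have h4 := dist_triangle e (δ s) (ω (t - m))
          rw [dist_eδ s ⟨hs.1, hsm⟩] at h4
          linarith
        have hlow2 : (t - m) - (m - s) ≤ dist (δ s) (ω (t - m)) := by
          have h3 := dist_triangle (δ m) (δ s) (ω (t - m))
          have h4 : dist (δ m) (δ s) = m - s := by
            rw [hδ m ⟨hm, le_rfl⟩ s ⟨hs.1, hsm⟩, abs_of_nonneg (by linarith)]
          have h5 : dist (δ m) (ω (t - m)) = t - m := by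
            rw [← hω0, hω 0 ⟨le_rfl, hR⟩ (t - m) htIcc,
              abs_of_nonpos (by linarith [htIcc.1])]; ring
          linarith
        rw [habs]
        constructor
        · by_cases hc : t - m ≤ 2 * (m - s)
          · linarith
          · push_neg at hc; linarith
        · linarith
      · push_neg at hsm
        have hsIcc : s - m ∈ Icc (0:ℝ) R := ⟨by linarith, by linarith [hs.2]⟩
        rw [hσr s hs hsm, hσr t ht htm, hω (s - m) hsIcc (t - m) htIcc]
        have h6 : s - m - (t - m) = s - t := by ring
        rw [h6, habs]
        constructor <;> linarith
  intro s hs t ht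
  rcases le_total s t with h | h
  · exact main s hs t ht h
  · obtain ⟨h1, h2⟩ := main t ht s hs h
    rw [dist_comm (σ t) (σ s)] at h1 h2
    rw [abs_sub_comm s t]
    exact ⟨h1, h2⟩

/-- Key lemma: if `r ≤ (x·y)_e` with `x` on the first ray and `y` on the second,
then there is a point at distance exactly `r` from `e` which is `N 3 0`-close to
both rays. -/
lemma morse_key {X : Type*} [MetricSpace X] (hX : GeodesicSpace X) {e : X}
    {N : ℝ → ℝ → ℝ} {ℓ₁ ℓ₂ : ℝ → X}
    (h₁ : IsMorseRay N ℓ₁) (h₂ : IsMorseRay N ℓ₂)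
    (he₁ : ℓ₁ 0 = e) (he₂ : ℓ₂ 0 = e)
    {x y : X} (hx : x ∈ ℓ₁ '' Ici 0) (hy : y ∈ ℓ₂ '' Ici 0)
    {r : ℝ} (hr : 0 ≤ r) (hrg : r ≤ gprod e x y) :
    ∃ p : X, dist e p = r ∧
      (∃ a ∈ Ici (0:ℝ), dist p (ℓ₁ a) ≤ N 3 0) ∧
      (∃ b ∈ Ici (0:ℝ), dist p (ℓ₂ b) ≤ N 3 0) := by
  obtain ⟨γ, hγfrom⟩ := hX y x
  have hL0 : 0 ≤ dist y x := hγfrom.1.1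
  have hγ : ∀ u ∈ Icc (0:ℝ) (dist y x), ∀ v ∈ Icc (0:ℝ) (dist y x),
      dist (γ u) (γ v) = |u - v| := hγfrom.1.2
  have hγ0 : γ 0 = y := hγfrom.2.1
  have hγL : γ (dist y x) = x := hγfrom.2.2
  set L := dist y x with hLdef
  -- continuity of the distance to e along γ
  have hcont : ContinuousOn (fun v => dist e (γ v)) (Icc 0 L) := by
    apply LipschitzOnWith.continuousOn (K := 1)
    rw [lipschitzOnWith_iff_dist_le_mul]
    intro u hu v hv
    have h1 : |dist e (γ u) - dist e (γ v)| ≤ dist (γ u) (γ v) := by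
      rw [dist_comm e (γ u), dist_comm e (γ v)]
      exact abs_dist_sub_le _ _ _
    rw [hγ u hu v hv] at h1
    rw [Real.dist_eq, Real.dist_eq]
    simpa using h1
  obtain ⟨v_m, hvm, hminv'⟩ :=
    isCompact_Icc.exists_isMinOn (nonempty_Icc.mpr hL0) hcont
  have hminv : ∀ w ∈ Icc (0:ℝ) L, dist e (γ v_m) ≤ dist e (γ w) :=
    fun w hw => hminv' hw
  obtain ⟨δ, hδfrom⟩ := hX e (γ v_m)
  set m := dist e (γ v_m) with hmdef
  have hm0 : 0 ≤ m := hδfrom.1.1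
  have hδ : ∀ u ∈ Icc (0:ℝ) m, ∀ v ∈ Icc (0:ℝ) m,
      dist (δ u) (δ v) = |u - v| := hδfrom.1.2
  have hδ0 : δ 0 = e := hδfrom.2.1
  have hδm : δ m = γ v_m := hδfrom.2.2
  -- r ≤ m
  have hx1 : dist (γ v_m) x = L - v_m := by
    rw [← hγL, hγ v_m hvm L ⟨hL0, le_rfl⟩, abs_of_nonpos (by linarith [hvm.2])]
    ring
  have hy1 : dist (γ v_m) y = v_m := by
    rw [← hγ0, hγ v_m hvm 0 ⟨le_rfl, hL0⟩, abs_of_nonneg (by linarith [hvm.1])]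
    ring
  have hrm : r ≤ m := by
    have h1 := dist_triangle e (γ v_m) x
    have h2 := dist_triangle e (γ v_m) y
    rw [hx1] at h1
    rw [hy1] at h2
    have hxy : dist x y = L := by rw [hLdef, dist_comm]
    have hgp : gprod e x y = (dist e x + dist e y - dist x y) / 2 := rfl
    rw [hgp, hxy] at hrg
    rw [hmdef] at *
    linarith
  -- the forward concatenation, reaching x
  have hmain₁ : ∃ a ∈ Ici (0:ℝ), dist (δ r) (ℓ₁ a) ≤ N 3 0 := by
    set σ₁ : ℝ → X := fun t => if t ≤ m then δ t else γ (v_m + (t - m)) with hσ₁def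
    have hσ₁l : ∀ t ∈ Icc (0:ℝ) m, σ₁ t = δ t := by
      intro t ht; simp only [hσ₁def]; rw [if_pos ht.2]
    have hσ₁r : ∀ t ∈ Icc (0:ℝ) (m + (L - v_m)), m < t →
        σ₁ t = (fun u => γ (v_m + u)) (t - m) := by
      intro t _ hmt; simp only [hσ₁def]; rw [if_neg (not_le.mpr hmt)]
    have hω : ∀ u ∈ Icc (0:ℝ) (L - v_m), ∀ v ∈ Icc (0:ℝ) (L - v_m),
        dist ((fun u => γ (v_m + u)) u) ((fun u => γ (v_m + u)) v) = |u - v| := by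
      intro u hu v hv
      have h1 : v_m + u ∈ Icc (0:ℝ) L := ⟨by linarith [hvm.1, hu.1], by linarith [hu.2]⟩
      have h2 : v_m + v ∈ Icc (0:ℝ) L := ⟨by linarith [hvm.1, hv.1], by linarith [hv.2]⟩
      show dist (γ (v_m + u)) (γ (v_m + v)) = |u - v|
      rw [hγ _ h1 _ h2]
      congr 1
      ring
    have hω0 : (fun u => γ (v_m + u)) 0 = δ m := by
      show γ (v_m + 0) = δ m
      rw [hδm, add_zero]
    have hmin : ∀ v ∈ Icc (0:ℝ) (L - v_m), m ≤ dist e ((fun u => γ (v_m + u)) v) := by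
      intro v hv
      exact hminv (v_m + v) ⟨by linarith [hvm.1, hv.1], by linarith [hv.2]⟩
    have hqg := concat_qg e δ (fun u => γ (v_m + u)) σ₁ m (L - v_m) hm0
      (by linarith [hvm.2]) hδ hδ0 hω hω0 hmin hσ₁l hσ₁r
    have hmem0 : σ₁ 0 ∈ ℓ₁ '' Ici 0 := by
      rw [hσ₁l 0 ⟨le_rfl, hm0⟩, hδ0, ← he₁]
      exact mem_image_of_mem _ self_mem_Ici
    have hmemB : σ₁ (m + (L - v_m)) ∈ ℓ₁ '' Ici 0 := by
      have hend : σ₁ (m + (L - v_m)) = x := by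
        by_cases hc : m + (L - v_m) ≤ m
        · have hLv : L - v_m = 0 := le_antisymm (by linarith) (by linarith [hvm.2])
          have hvL : v_m = L := by linarith [sub_eq_zero.mp hLv]
          rw [hσ₁l _ ⟨by linarith, hc⟩, hLv, add_zero, hδm, hvL, hγL]
        · push_neg at hc
          rw [hσ₁r _ ⟨by linarith [hvm.2], le_rfl⟩ hc]
          show γ (v_m + (m + (L - v_m) - m)) = x
          have h7 : v_m + (m + (L - v_m) - m) = L := by ring
          rw [h7, hγL]
      rw [hend]; exact hx
    obtain ⟨q, hqmem, hqd⟩ := h₁.2 3 0 (by norm_num) le_rfl 0 (m + (L - v_m))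
      (by linarith [hvm.2]) σ₁ hqg hmem0 hmemB r ⟨hr, by linarith [hvm.2]⟩
    obtain ⟨a, ha0, rfl⟩ := hqmem
    rw [hσ₁l r ⟨hr, hrm⟩] at hqd
    exact ⟨a, ha0, hqd⟩
  -- the backward concatenation, reaching y
  have hmain₂ : ∃ b ∈ Ici (0:ℝ), dist (δ r) (ℓ₂ b) ≤ N 3 0 := by
    set σ₂ : ℝ → X := fun t => if t ≤ m then δ t else γ (v_m - (t - m)) with hσ₂def
    have hσ₂l : ∀ t ∈ Icc (0:ℝ) m, σ₂ t = δ t := by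
      intro t ht; simp only [hσ₂def]; rw [if_pos ht.2]
    have hσ₂r : ∀ t ∈ Icc (0:ℝ) (m + v_m), m < t →
        σ₂ t = (fun u => γ (v_m - u)) (t - m) := by
      intro t _ hmt; simp only [hσ₂def]; rw [if_neg (not_le.mpr hmt)]
    have hω : ∀ u ∈ Icc (0:ℝ) v_m, ∀ v ∈ Icc (0:ℝ) v_m,
        dist ((fun u => γ (v_m - u)) u) ((fun u => γ (v_m - u)) v) = |u - v| := by
      intro u hu v hv
      have h1 : v_m - u ∈ Icc (0:ℝ) L := ⟨by linarith [hu.2], by linarith [hvm.2, hu.1]⟩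
      have h2 : v_m - v ∈ Icc (0:ℝ) L := ⟨by linarith [hv.2], by linarith [hvm.2, hv.1]⟩
      show dist (γ (v_m - u)) (γ (v_m - v)) = |u - v|
      rw [hγ _ h1 _ h2]
      have h8 : v_m - u - (v_m - v) = v - u := by ring
      rw [h8, abs_sub_comm]
    have hω0 : (fun u => γ (v_m - u)) 0 = δ m := by
      show γ (v_m - 0) = δ m
      rw [hδm, sub_zero]
    have hmin : ∀ v ∈ Icc (0:ℝ) v_m, m ≤ dist e ((fun u => γ (v_m - u)) v) := by
      intro v hv
      exact hminv (v_m - v) ⟨by linarith [hv.2], by linarith [hvm.2, hv.1]⟩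
    have hqg := concat_qg e δ (fun u => γ (v_m - u)) σ₂ m v_m hm0
      hvm.1 hδ hδ0 hω hω0 hmin hσ₂l hσ₂r
    have hmem0 : σ₂ 0 ∈ ℓ₂ '' Ici 0 := by
      rw [hσ₂l 0 ⟨le_rfl, hm0⟩, hδ0, ← he₂]
      exact mem_image_of_mem _ self_mem_Ici
    have hmemB : σ₂ (m + v_m) ∈ ℓ₂ '' Ici 0 := by
      have hend : σ₂ (m + v_m) = y := by
        by_cases hc : m + v_m ≤ m
        · have hv0 : v_m = 0 := le_antisymm (by linarith) hvm.1
          rw [hσ₂l _ ⟨by linarith [hvm.1], hc⟩, hv0, add_zero, hδm, hv0, hγ0]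
        · push_neg at hc
          rw [hσ₂r _ ⟨by linarith [hvm.1], le_rfl⟩ hc]
          show γ (v_m - (m + v_m - m)) = y
          have h7 : v_m - (m + v_m - m) = 0 := by ring
          rw [h7, hγ0]
      rw [hend]; exact hy
    obtain ⟨q, hqmem, hqd⟩ := h₂.2 3 0 (by norm_num) le_rfl 0 (m + v_m)
      (by linarith [hvm.1]) σ₂ hqg hmem0 hmemB r ⟨hr, by linarith [hvm.1]⟩
    obtain ⟨b, hb0, rfl⟩ := hqmem
    rw [hσ₂l r ⟨hr, hrm⟩] at hqd
    exact ⟨b, hb0, hqd⟩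
  refine ⟨δ r, ?_, hmain₁, hmain₂⟩
  rw [← hδ0, hδ 0 ⟨le_rfl, hm0⟩ r ⟨hr, hrm⟩, abs_of_nonpos (by linarith)]
  ring

/-- two equivalent `N`-Morse geodesic rays based at `e` are at
Hausdorff distance at most `28·N(3,0)`. -/
theorem statement9 {X : Type*} [MetricSpace X] (hX : GeodesicSpace X) (e : X)
    (N : ℝ → ℝ → ℝ) (hN : IsMorseGauge N)
    (ℓ₁ ℓ₂ : ℝ → X) (h₁ : IsMorseRay N ℓ₁) (h₂ : IsMorseRay N ℓ₂)
    (he₁ : ℓ₁ 0 = e) (he₂ : ℓ₂ 0 = e)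
    (heq : Tendsto (fun p : ℕ × ℕ => gprod e (ℓ₁ (p.1 : ℝ)) (ℓ₂ (p.2 : ℝ)))
      atTop atTop) :
    (∀ s ∈ Ici (0:ℝ), ∃ t ∈ Ici (0:ℝ), dist (ℓ₁ s) (ℓ₂ t) ≤ 28 * N 3 0) ∧
    (∀ t ∈ Ici (0:ℝ), ∃ s ∈ Ici (0:ℝ), dist (ℓ₁ s) (ℓ₂ t) ≤ 28 * N 3 0) := by
  have hN30 : 0 ≤ N 3 0 := hN 3 0 (by norm_num) le_rfl
  have key : ∀ r : ℝ, 0 ≤ r → ∃ p : X, dist e p = r ∧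
      (∃ a ∈ Ici (0:ℝ), dist p (ℓ₁ a) ≤ N 3 0) ∧
      (∃ b ∈ Ici (0:ℝ), dist p (ℓ₂ b) ≤ N 3 0) := by
    intro r hr
    obtain ⟨P, hP⟩ := (heq.eventually (eventually_ge_atTop r)).exists
    exact morse_key hX h₁ h₂ he₁ he₂
      (mem_image_of_mem _ (Set.mem_Ici.mpr (Nat.cast_nonneg P.1)))
      (mem_image_of_mem _ (Set.mem_Ici.mpr (Nat.cast_nonneg P.2))) hr hP
  constructor
  · intro s hs
    obtain ⟨p, hep, ⟨a, ha0, hpa⟩, ⟨b, hb0, hpb⟩⟩ := key s hs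
    refine ⟨b, hb0, ?_⟩
    have h1 : dist (ℓ₁ s) (ℓ₁ a) = |s - a| := h₁.1 s hs a ha0
    have h2 : dist e (ℓ₁ a) = a := by
      rw [← he₁, h₁.1 0 self_mem_Ici a ha0, zero_sub, abs_neg, abs_of_nonneg ha0]
    have h3 : |s - a| ≤ N 3 0 := by
      have h4 := abs_dist_sub_le p (ℓ₁ a) e
      rw [dist_comm p e, hep, dist_comm (ℓ₁ a) e, h2] at h4
      exact le_trans h4 hpa
    calc dist (ℓ₁ s) (ℓ₂ b)
        ≤ dist (ℓ₁ s) (ℓ₁ a) + dist (ℓ₁ a) p + dist p (ℓ₂ b) := dist_triangle4 _ _ _ _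
      _ ≤ N 3 0 + N 3 0 + N 3 0 := by
          have h5 : dist (ℓ₁ a) p ≤ N 3 0 := by rw [dist_comm]; exact hpa
          rw [h1]
          exact add_le_add (add_le_add h3 h5) hpb
      _ ≤ 28 * N 3 0 := by linarith
  · intro t ht
    obtain ⟨p, hep, ⟨a, ha0, hpa⟩, ⟨b, hb0, hpb⟩⟩ := key t ht
    refine ⟨a, ha0, ?_⟩
    have h1 : dist (ℓ₂ b) (ℓ₂ t) = |b - t| := h₂.1 b hb0 t ht
    have h2 : dist e (ℓ₂ b) = b := by
      rw [← he₂, h₂.1 0 self_mem_Ici b hb0, zero_sub, abs_neg, abs_of_nonneg hb0]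
    have h3 : |b - t| ≤ N 3 0 := by
      have h4 := abs_dist_sub_le (ℓ₂ b) p e
      rw [dist_comm p e, hep, dist_comm (ℓ₂ b) e, h2] at h4
      rw [dist_comm (ℓ₂ b) p] at h4
      exact le_trans h4 hpb
    calc dist (ℓ₁ a) (ℓ₂ t)
        ≤ dist (ℓ₁ a) p + dist p (ℓ₂ b) + dist (ℓ₂ b) (ℓ₂ t) := dist_triangle4 _ _ _ _
      _ ≤ N 3 0 + N 3 0 + N 3 0 := by
          have h5 : dist (ℓ₁ a) p ≤ N 3 0 := by rw [dist_comm]; exact hpa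
          rw [h1]
          exact add_le_add (add_le_add h5 hpb) h3
      _ ≤ 28 * N 3 0 := by linarith
end

section
/- Let X be a geodesic metric space and let ℓ₁, ℓ₂ be two geodesics in X with ℓ₁(0) = ℓ₂(0) = e. Let x₁ be a point on ℓ₁ and x₂ a point on ℓ₂, let P be a geodesic from x₁ to x₂, let z ∈ P be a point at minimal distance from e among points of P, and let γ be any geodesic from z to e. Then the concatenation of the subpath of P from x₁ to z followed by γ, and the concatenation of the subpath of P from x₂ to z followed by γ, are both (3,0)-quasi-geodesics (when parametrized by arc length). Moreover, if ℓ₁ and ℓ₂ are N-Morse for a Morse gauge N, then d(z, ℓ₁) ≤ N(3,0) and d(z, ℓ₂) ≤ N(3,0). -/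
open Set Filter

/-- Concatenating a geodesic segment ending at `z` whose points are all at
distance `≥ dist z e` from `e` with a geodesic from `z` to `e` gives a
`(3,0)`-quasi-geodesic. -/
lemma concat_qg_s13 {X : Type*} [MetricSpace X] (e z : X) (γ : ℝ → X)
    (hγ : IsGeodesicFromTo γ z e) (f : ℝ → X) (m : ℝ) (hm : 0 ≤ m)
    (hf : ∀ s ∈ Icc (0:ℝ) m, ∀ t ∈ Icc (0:ℝ) m, dist (f s) (f t) = |s - t|)
    (hfm : f m = z)
    (hmin : ∀ s ∈ Icc (0:ℝ) m, dist z e ≤ dist e (f s)) :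
    IsQuasiGeodesicOn 3 0 (Icc 0 (m + dist z e))
      (fun s => if s ≤ m then f s else γ (s - m)) := by
  set d := dist z e with hd
  have hd0 : 0 ≤ d := dist_nonneg
  obtain ⟨⟨_, hγiso⟩, hγ0, hγd⟩ := hγ
  set σ : ℝ → X := fun s => if s ≤ m then f s else γ (s - m) with hσ
  have key : ∀ s ∈ Icc (0:ℝ) (m + d), ∀ t ∈ Icc (0:ℝ) (m + d), s ≤ t →
      (t - s) / 3 ≤ dist (σ s) (σ t) ∧ dist (σ s) (σ t) ≤ t - s := by
    intro s hs t ht hst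
    by_cases htm : t ≤ m
    · have hsm : s ≤ m := le_trans hst htm
      have : σ s = f s := if_pos hsm
      have h2 : σ t = f t := if_pos htm
      rw [this, h2, hf s ⟨hs.1, hsm⟩ t ⟨ht.1, htm⟩, abs_of_nonpos (by linarith)]
      constructor <;> linarith
    · push_neg at htm
      have hbt : t - m ∈ Icc (0:ℝ) d := ⟨by linarith, by linarith [ht.2]⟩
      have hσt : σ t = γ (t - m) := if_neg (not_le.mpr htm)
      by_cases hsm : s ≤ m
      · -- s on f, t on γ
        have hσs : σ s = f s := if_pos hsm
        set a := m - s with ha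
        set b := t - m with hb
        have ha0 : 0 ≤ a := by linarith
        have hfs : dist (f s) z = a := by
          rw [← hfm, hf s ⟨hs.1, hsm⟩ m ⟨hm, le_refl m⟩, abs_of_nonpos (by linarith)]
          ring
        have hzb : dist z (γ b) = b := by
          rw [← hγ0, hγiso 0 ⟨le_refl 0, hd0⟩ b hbt, abs_of_nonpos (by linarith [hbt.1])]
          ring
        have hbe : dist (γ b) e = d - b := by
          rw [← hγd, hγiso b hbt d ⟨hd0, le_refl d⟩, abs_of_nonpos (by linarith [hbt.2])]
          ring
        have hupper : dist (f s) (γ b) ≤ a + b :=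
          le_trans (dist_triangle (f s) z (γ b)) (by rw [hfs, hzb])
        have hlow1 : b ≤ dist (f s) (γ b) := by
          have h1 := hmin s ⟨hs.1, hsm⟩
          have h2 := dist_triangle e (γ b) (f s)
          rw [dist_comm e (γ b), hbe, dist_comm (γ b) (f s)] at h2
          linarith
        have hlow2 : a - b ≤ dist (f s) (γ b) := by
          have h2 := dist_triangle (f s) (γ b) z
          rw [dist_comm z (γ b)] at hzb
          linarith [hfs ▸ h2, hzb]
        rw [hσs, hσt]
        have hts : t - s = a + b := by ring
        constructor
        · rw [hts]
          rcases le_or_gt a (2 * b) with h | h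
          · linarith
          · linarith
        · rw [hts]; exact hupper
      · -- both on γ
        push_neg at hsm
        have hbs : s - m ∈ Icc (0:ℝ) d := ⟨by linarith, by linarith [hs.2]⟩
        have hσs : σ s = γ (s - m) := if_neg (not_le.mpr hsm)
        rw [hσs, hσt, hγiso _ hbs _ hbt]
        rw [show s - m - (t - m) = s - t by ring, abs_of_nonpos (by linarith)]
        constructor <;> linarith
  intro s hs t ht
  rcases le_total s t with h | h
  · obtain ⟨h1, h2⟩ := key s hs t ht h
    rw [abs_of_nonpos (by linarith)]
    constructor <;> [linarith; linarith]
  · obtain ⟨h1, h2⟩ := key t ht s hs h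
    rw [abs_of_nonneg (by linarith), dist_comm]
    constructor <;> [linarith; linarith]

/-- with `z` a point of a geodesic `P` from `x₁ ∈ ℓ₁` to
`x₂ ∈ ℓ₂` closest to `e`, the concatenations `x₁ →_P z →_γ e` and
`x₂ →_P z →_γ e` are `(3,0)`-quasi-geodesics; if `ℓ₁, ℓ₂` are `N`-Morse then
`z` is within `N(3,0)` of each of them. -/
theorem statement13 {X : Type*} [MetricSpace X] (hX : GeodesicSpace X) (e : X)
    (ℓ₁ ℓ₂ : ℝ → X) (L₁ L₂ : ℝ)
    (hg₁ : IsGeodesicSeg ℓ₁ L₁) (hg₂ : IsGeodesicSeg ℓ₂ L₂)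
    (he₁ : ℓ₁ 0 = e) (he₂ : ℓ₂ 0 = e)
    (t₁ t₂ : ℝ) (ht₁ : t₁ ∈ Icc (0:ℝ) L₁) (ht₂ : t₂ ∈ Icc (0:ℝ) L₂)
    (P : ℝ → X) (hP : IsGeodesicFromTo P (ℓ₁ t₁) (ℓ₂ t₂))
    (u : ℝ) (hu : u ∈ Icc (0:ℝ) (dist (ℓ₁ t₁) (ℓ₂ t₂)))
    (humin : ∀ v ∈ Icc (0:ℝ) (dist (ℓ₁ t₁) (ℓ₂ t₂)),
      dist e (P u) ≤ dist e (P v))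
    (γ : ℝ → X) (hγ : IsGeodesicFromTo γ (P u) e) :
    IsQuasiGeodesicOn 3 0 (Icc 0 (u + dist (P u) e))
      (fun s => if s ≤ u then P s else γ (s - u)) ∧
    IsQuasiGeodesicOn 3 0 (Icc 0 ((dist (ℓ₁ t₁) (ℓ₂ t₂) - u) + dist (P u) e))
      (fun s => if s ≤ dist (ℓ₁ t₁) (ℓ₂ t₂) - u then
          P (dist (ℓ₁ t₁) (ℓ₂ t₂) - s)
        else γ (s - (dist (ℓ₁ t₁) (ℓ₂ t₂) - u))) ∧
    (∀ N : ℝ → ℝ → ℝ, IsMorseGauge N →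
      IsMorseSet N (ℓ₁ '' Icc 0 L₁) → IsMorseSet N (ℓ₂ '' Icc 0 L₂) →
      (∃ s ∈ Icc (0:ℝ) L₁, dist (P u) (ℓ₁ s) ≤ N 3 0) ∧
      (∃ s ∈ Icc (0:ℝ) L₂, dist (P u) (ℓ₂ s) ≤ N 3 0)) := by
  set D := dist (ℓ₁ t₁) (ℓ₂ t₂) with hD
  set d := dist (P u) e with hdd
  have hd0 : (0:ℝ) ≤ d := dist_nonneg
  obtain ⟨⟨hD0, hPiso⟩, hP0, hPD⟩ := hP
  have hu0 := hu.1
  have huD := hu.2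
  -- first concatenation
  have qg₁ : IsQuasiGeodesicOn 3 0 (Icc 0 (u + d))
      (fun s => if s ≤ u then P s else γ (s - u)) := by
    apply concat_qg_s13 e (P u) γ hγ P u hu0
    · intro s hs t ht
      exact hPiso s ⟨hs.1, le_trans hs.2 huD⟩ t ⟨ht.1, le_trans ht.2 huD⟩
    · rfl
    · intro s hs
      rw [dist_comm (P u) e]
      exact humin s ⟨hs.1, le_trans hs.2 huD⟩
  -- second concatenation
  have qg₂ : IsQuasiGeodesicOn 3 0 (Icc 0 ((D - u) + d))
      (fun s => if s ≤ D - u then P (D - s) else γ (s - (D - u))) := by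
    apply concat_qg_s13 e (P u) γ hγ (fun s => P (D - s)) (D - u) (by linarith)
    · intro s hs t ht
      have h1 : D - s ∈ Icc (0:ℝ) D := ⟨by linarith [hs.2], by linarith [hs.1]⟩
      have h2 : D - t ∈ Icc (0:ℝ) D := ⟨by linarith [ht.2], by linarith [ht.1]⟩
      rw [hPiso _ h1 _ h2, show D - s - (D - t) = t - s by ring, abs_sub_comm]
    · simp
    · intro s hs
      rw [dist_comm (P u) e]
      exact humin (D - s) ⟨by linarith [hs.2], by linarith [hs.1]⟩
  refine ⟨qg₁, qg₂, ?_⟩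
  intro N hN hM₁ hM₂
  constructor
  · -- ℓ₁
    have h0 : (fun s => if s ≤ u then P s else γ (s - u)) 0 ∈ ℓ₁ '' Icc 0 L₁ := by
      simp only [if_pos hu0, hP0]
      exact ⟨t₁, ht₁, rfl⟩
    have hb : (fun s => if s ≤ u then P s else γ (s - u)) (u + d) ∈ ℓ₁ '' Icc 0 L₁ := by
      have : (fun s => if s ≤ u then P s else γ (s - u)) (u + d) = e := by
        beta_reduce
        by_cases h : u + d ≤ u
        · have hd' : d = 0 := le_antisymm (by linarith) hd0
          rw [if_pos h, hd', add_zero]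
          exact dist_eq_zero.mp hd'
        · simp only [if_neg h, show u + d - u = d by ring]
          exact hγ.2.2
      rw [this]
      exact ⟨0, ⟨le_refl 0, hg₁.1⟩, he₁⟩
    obtain ⟨g, ⟨s, hsmem, rfl⟩, hgd⟩ :=
      hM₁ 3 0 (by norm_num) le_rfl 0 (u + d) (by linarith) _ qg₁ h0 hb u
        ⟨hu0, by linarith⟩
    refine ⟨s, hsmem, ?_⟩
    simpa using hgd
  · -- ℓ₂
    have h0 : (fun s => if s ≤ D - u then P (D - s) else γ (s - (D - u))) 0
        ∈ ℓ₂ '' Icc 0 L₂ := by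
      simp only [if_pos (show (0:ℝ) ≤ D - u by linarith), sub_zero, hPD]
      exact ⟨t₂, ht₂, hPD.symm⟩
    have hb : (fun s => if s ≤ D - u then P (D - s) else γ (s - (D - u)))
        ((D - u) + d) ∈ ℓ₂ '' Icc 0 L₂ := by
      have he : (fun s => if s ≤ D - u then P (D - s) else γ (s - (D - u)))
          ((D - u) + d) = e := by
        beta_reduce
        by_cases h : (D - u) + d ≤ D - u
        · have hd' : d = 0 := le_antisymm (by linarith) hd0
          rw [if_pos h, hd', show D - (D - u + 0) = u by ring]
          exact dist_eq_zero.mp hd'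
        · simp only [if_neg h, show D - u + d - (D - u) = d by ring]
          exact hγ.2.2
      rw [he]
      exact ⟨0, ⟨le_refl 0, hg₂.1⟩, he₂⟩
    obtain ⟨g, ⟨s, hsmem, rfl⟩, hgd⟩ :=
      hM₂ 3 0 (by norm_num) le_rfl 0 ((D - u) + d) (by linarith) _ qg₂ h0 hb (D - u)
        ⟨by linarith, by linarith⟩
    refine ⟨s, hsmem, ?_⟩
    rw [if_pos (le_refl (D - u)), show D - (D - u) = u by ring] at hgd
    exact hgd
end

section
/- Let X be a geodesic metric space, N a Morse gauge, and let ℓ₁, ℓ₂ be N-Morse geodesics in X with ℓ₁(0) = ℓ₂(0) = e. Suppose there exists t₀ ≥ 0 such that d(ℓ₁(t), ℓ₂(t)) > 4N(3,0) for all t ≥ t₀ (within the domains of ℓ₁, ℓ₂) and d(ℓ₁(t₀), ℓ₂(t₀)) ≤ 6N(3,0). Let t₁, t₂ ≥ t₀ be in the respective domains, set x_i = ℓ_i(t₀) and y_i = ℓ_i(t_i), and let P be the arc-length parametrized path obtained by following ℓ₁ from y₁ back to x₁, then any geodesic from x₁ to x₂, then ℓ₂ from x₂ to y₂. Then P is a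 (1, 12N(3,0))-quasi-geodesic; in particular d(y₁, y₂) ≥ d(y₁, x₁) + d(x₁, x₂) + d(x₂, y₂) − 12N(3,0). -/
open Set Filter

section Statement14Aux

variable {X : Type*} [MetricSpace X]

/-- Concatenation of a geodesic `η` from `e` to a point `φ 0` that minimizes the
distance to `e` along the geodesic `φ`, followed by `φ` at speed 3, is a
`(3,0)`-quasi-geodesic. -/
lemma statement14_aux_qg (e : X) (η φ : ℝ → X) (R L : ℝ)
    (hR : 0 ≤ R) (hL : 0 ≤ L)
    (hη : ∀ r ∈ Icc (0:ℝ) R, ∀ r' ∈ Icc (0:ℝ) R, dist (η r) (η r') = |r - r'|)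
    (hφ : ∀ m ∈ Icc (0:ℝ) L, ∀ m' ∈ Icc (0:ℝ) L, dist (φ m) (φ m') = |m - m'|)
    (hη0 : η 0 = e) (hconn : η R = φ 0)
    (hmin : ∀ m ∈ Icc (0:ℝ) L, R ≤ dist e (φ m)) :
    IsQuasiGeodesicOn 3 0 (Icc 0 (R + L/3))
      (fun r => if r ≤ R then η r else φ (3*(r - R))) := by
  have key : ∀ s ∈ Icc (0:ℝ) (R + L/3), ∀ t ∈ Icc (0:ℝ) (R + L/3), s ≤ t →
      (t - s)/3 ≤ dist ((fun r => if r ≤ R then η r else φ (3*(r - R))) s)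
        ((fun r => if r ≤ R then η r else φ (3*(r - R))) t) ∧
      dist ((fun r => if r ≤ R then η r else φ (3*(r - R))) s)
        ((fun r => if r ≤ R then η r else φ (3*(r - R))) t) ≤ 3*(t - s) := by
    intro s hs t ht hst
    by_cases hsR : s ≤ R
    · by_cases htR : t ≤ R
      · have h1 : (fun r => if r ≤ R then η r else φ (3*(r - R))) s = η s := if_pos hsR
        have h2 : (fun r => if r ≤ R then η r else φ (3*(r - R))) t = η t := if_pos htR
        rw [h1, h2, hη s ⟨hs.1, hsR⟩ t ⟨le_trans hs.1 hst, htR⟩,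
          abs_of_nonpos (by linarith : s - t ≤ 0)]
        constructor <;> linarith
      · push_neg at htR
        have h1 : (fun r => if r ≤ R then η r else φ (3*(r - R))) s = η s := if_pos hsR
        have h2 : (fun r => if r ≤ R then η r else φ (3*(r - R))) t = φ (3*(t - R)) :=
          if_neg (not_le.mpr htR)
        have hmem : 3*(t - R) ∈ Icc (0:ℝ) L := ⟨by linarith, by linarith [ht.2]⟩
        have hs' : s ∈ Icc (0:ℝ) R := ⟨hs.1, hsR⟩
        have hes : dist e (η s) = s := by
          rw [← hη0, hη 0 ⟨le_rfl, hR⟩ s hs',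
            abs_of_nonpos (by linarith [hs.1] : (0:ℝ) - s ≤ 0), neg_sub, sub_zero]
        have hb1 : R - s ≤ dist (η s) (φ (3*(t-R))) := by
          have htri := dist_triangle e (η s) (φ (3*(t-R)))
          have hm2 := hmin _ hmem
          rw [hes] at htri
          linarith
        have hφ0m : dist (φ 0) (φ (3*(t-R))) = 3*(t-R) := by
          rw [hφ 0 ⟨le_rfl, hL⟩ _ hmem,
            abs_of_nonpos (by linarith : (0:ℝ) - 3*(t-R) ≤ 0), neg_sub, sub_zero]
        have hφ0s : dist (φ 0) (η s) = R - s := by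
          rw [← hconn, hη R ⟨hR, le_rfl⟩ s hs', abs_of_nonneg (by linarith : (0:ℝ) ≤ R - s)]
        have hb2 : 3*(t-R) - (R - s) ≤ dist (η s) (φ (3*(t-R))) := by
          have htri := dist_triangle (φ 0) (η s) (φ (3*(t-R)))
          rw [hφ0m, hφ0s] at htri
          linarith
        have hb0 : (0:ℝ) ≤ dist (η s) (φ (3*(t-R))) := dist_nonneg
        have hup : dist (η s) (φ (3*(t-R))) ≤ (R - s) + 3*(t - R) := by
          have htri := dist_triangle (η s) (φ 0) (φ (3*(t-R)))
          rw [hφ0m, dist_comm (η s) (φ 0), hφ0s] at htri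
          linarith
        rw [h1, h2]
        constructor
        · linarith
        · linarith
    · push_neg at hsR
      have htR : ¬ t ≤ R := by push_neg; linarith
      have h1 : (fun r => if r ≤ R then η r else φ (3*(r - R))) s = φ (3*(s - R)) :=
        if_neg (not_le.mpr hsR)
      have h2 : (fun r => if r ≤ R then η r else φ (3*(r - R))) t = φ (3*(t - R)) :=
        if_neg htR
      have hmems : 3*(s-R) ∈ Icc (0:ℝ) L := ⟨by linarith, by linarith [hs.2]⟩
      have hmemt : 3*(t-R) ∈ Icc (0:ℝ) L := ⟨by linarith, by linarith [ht.2]⟩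
      rw [h1, h2, hφ _ hmems _ hmemt,
        abs_of_nonpos (by linarith : 3*(s-R) - 3*(t-R) ≤ 0)]
      constructor <;> linarith
  intro s hs t ht
  rcases le_total s t with h|h
  · obtain ⟨h1, h2⟩ := key s hs t ht h
    rw [abs_of_nonpos (by linarith : s - t ≤ 0)]
    constructor
    · calc -(s-t)/3 - 0 = (t-s)/3 := by ring
        _ ≤ _ := h1
    · calc dist _ _ ≤ 3*(t-s) := h2
        _ = 3 * -(s-t) + 0 := by ring
  · obtain ⟨h1, h2⟩ := key t ht s hs h
    rw [dist_comm] at h1 h2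
    rw [abs_of_nonneg (by linarith : (0:ℝ) ≤ s - t)]
    constructor
    · calc (s-t)/3 - 0 = (s-t)/3 := by ring
        _ ≤ _ := h1
    · calc dist _ _ ≤ 3*(s-t) := h2
        _ = 3 * (s-t) + 0 := by ring

/-- If a point `w` at distance `r` from `e` is within `M` of some point of a
geodesic `ℓ` emanating from `e`, then it is within `2M` of `ℓ r`. -/
lemma statement14_aux_track {e : X} {ℓ : ℝ → X} {L M r : ℝ}
    (hg : IsGeodesicSeg ℓ L) (hℓ0 : ℓ 0 = e) {w : X}
    (hr0 : 0 ≤ r) (hrL : r ≤ L) (hwr : dist e w = r)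
    {c : ℝ} (hc : c ∈ Icc (0:ℝ) L) (hwc : dist w (ℓ c) ≤ M) :
    dist w (ℓ r) ≤ 2 * M := by
  have h0L : (0:ℝ) ∈ Icc (0:ℝ) L := ⟨le_rfl, hg.1⟩
  have h1 : dist e (ℓ c) = c := by
    rw [← hℓ0, hg.2 0 h0L c hc,
      abs_of_nonpos (by linarith [hc.1] : (0:ℝ) - c ≤ 0), neg_sub, sub_zero]
  have h2 : |c - r| ≤ M := by
    have h3 := abs_dist_sub_le (ℓ c) w e
    rw [dist_comm (ℓ c) e, h1, dist_comm w e, hwr] at h3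
    rw [dist_comm w (ℓ c)] at hwc
    exact le_trans h3 hwc
  calc dist w (ℓ r) ≤ dist w (ℓ c) + dist (ℓ c) (ℓ r) := dist_triangle _ _ _
    _ ≤ M + |c - r| := by
        rw [hg.2 c hc r ⟨hr0, hrL⟩]
        linarith
    _ ≤ 2*M := by linarith

/-- Key estimate: two `N`-Morse geodesics issuing from `e` which stay more than
`4N(3,0)` apart at time `t₀` diverge at full speed: `d(ℓ₁ u, ℓ₂ v) ≥ u + v - 2t₀`. -/
lemma statement14_aux_key (hX : GeodesicSpace X) (e : X)
    (N : ℝ → ℝ → ℝ)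
    (ℓ₁ ℓ₂ : ℝ → X) (L₁ L₂ : ℝ)
    (hg₁ : IsGeodesicSeg ℓ₁ L₁) (hg₂ : IsGeodesicSeg ℓ₂ L₂)
    (hm₁ : IsMorseSet N (ℓ₁ '' Icc 0 L₁)) (hm₂ : IsMorseSet N (ℓ₂ '' Icc 0 L₂))
    (he₁ : ℓ₁ 0 = e) (he₂ : ℓ₂ 0 = e)
    (t₀ : ℝ) (ht₀ : 0 ≤ t₀) (ht₀₁ : t₀ ≤ L₁) (ht₀₂ : t₀ ≤ L₂)
    (h4M : 4 * N 3 0 < dist (ℓ₁ t₀) (ℓ₂ t₀))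
    (u v : ℝ) (hu₀ : t₀ ≤ u) (hu₁ : u ≤ L₁) (hv₀ : t₀ ≤ v) (hv₂ : v ≤ L₂) :
    u + v - 2*t₀ ≤ dist (ℓ₁ u) (ℓ₂ v) := by
  obtain ⟨γ, ⟨hd0, hγ⟩, hγ0, hγ1⟩ := hX (ℓ₁ u) (ℓ₂ v)
  set d := dist (ℓ₁ u) (ℓ₂ v) with hdd
  have hu0 : (0:ℝ) ≤ u := le_trans ht₀ hu₀
  have hv0 : (0:ℝ) ≤ v := le_trans ht₀ hv₀
  -- minimize the distance to e along γ
  have hcont : ContinuousOn (fun m => dist e (γ m)) (Icc 0 d) := by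
    rw [Metric.continuousOn_iff]
    intro b hb ε hε
    refine ⟨ε, hε, fun a ha hab => ?_⟩
    have h1 : dist (dist e (γ a)) (dist e (γ b)) ≤ dist (γ a) (γ b) := by
      rw [Real.dist_eq]
      have h2 := abs_dist_sub_le (γ a) (γ b) e
      rw [dist_comm (γ a) e, dist_comm (γ b) e] at h2
      exact h2
    calc dist (dist e (γ a)) (dist e (γ b)) ≤ dist (γ a) (γ b) := h1
      _ = |a - b| := hγ a ha b hb
      _ = dist a b := (Real.dist_eq a b).symm
      _ < ε := hab
  obtain ⟨me, hme, hminF0⟩ := isCompact_Icc.exists_isMinOn ⟨0, le_rfl, hd0⟩ hcont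
  have hminF : ∀ y ∈ Icc (0:ℝ) d, dist e (γ me) ≤ dist e (γ y) :=
    fun y hy => isMinOn_iff.mp hminF0 y hy
  obtain ⟨η, ⟨hR0, hη⟩, hη0, hη1⟩ := hX e (γ me)
  set R := dist e (γ me) with hRdef
  have hR : R ≤ t₀ := by
    by_contra hcon
    push_neg at hcon
    have ht₀R : t₀ ≤ R := hcon.le
    have het₀ : dist e (η t₀) = t₀ := by
      rw [← hη0, hη 0 ⟨le_rfl, hR0⟩ t₀ ⟨ht₀, ht₀R⟩,
        abs_of_nonpos (by linarith : (0:ℝ) - t₀ ≤ 0), neg_sub, sub_zero]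
    -- first concatenation: η then γ backwards, endpoints e and ℓ₁ u on ℓ₁
    have hcl₁ : dist (η t₀) (ℓ₁ t₀) ≤ 2 * N 3 0 := by
      have hφ : ∀ m ∈ Icc (0:ℝ) me, ∀ m' ∈ Icc (0:ℝ) me,
          dist (γ (me - m)) (γ (me - m')) = |m - m'| := by
        intro m hm m' hm'
        rw [hγ (me - m) ⟨by linarith [hm.2], by linarith [hm.1, hme.2]⟩
            (me - m') ⟨by linarith [hm'.2], by linarith [hm'.1, hme.2]⟩,
          show me - m - (me - m') = m' - m by ring, abs_sub_comm]
      have hconn : η R = γ (me - 0) := by rw [sub_zero]; exact hη1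
      have hminx : ∀ m ∈ Icc (0:ℝ) me, R ≤ dist e (γ (me - m)) := by
        intro m hm
        exact hminF (me - m) ⟨by linarith [hm.2], by linarith [hm.1, hme.2]⟩
      have hQG := statement14_aux_qg e η (fun m => γ (me - m)) R me hR0 hme.1
        hη hφ hη0 hconn hminx
      have hmem0 : (fun r => if r ≤ R then η r else (fun m => γ (me - m)) (3*(r - R))) 0
          ∈ ℓ₁ '' Icc 0 L₁ := by
        have hval : (fun r => if r ≤ R then η r else (fun m => γ (me - m)) (3*(r - R))) 0
            = η 0 := if_pos hR0
        rw [hval, hη0]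
        exact ⟨0, ⟨le_rfl, hg₁.1⟩, he₁⟩
      have hmemb : (fun r => if r ≤ R then η r else (fun m => γ (me - m)) (3*(r - R)))
          (R + me/3) ∈ ℓ₁ '' Icc 0 L₁ := by
        have hval : (fun r => if r ≤ R then η r else (fun m => γ (me - m)) (3*(r - R)))
            (R + me/3) = ℓ₁ u := by
          by_cases hc : R + me/3 ≤ R
          · have hme0 : me = 0 := le_antisymm (by linarith) hme.1
            have h1 : (fun r => if r ≤ R then η r else (fun m => γ (me - m)) (3*(r - R)))
                (R + me/3) = η (R + me/3) := if_pos hc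
            rw [h1, show R + me/3 = R by rw [hme0]; ring, hη1, hme0]
            exact hγ0
          · have h1 : (fun r => if r ≤ R then η r else (fun m => γ (me - m)) (3*(r - R)))
                (R + me/3) = γ (me - 3*(R + me/3 - R)) := if_neg hc
            rw [h1, show me - 3*(R + me/3 - R) = 0 by ring]
            exact hγ0
        rw [hval]
        exact ⟨u, ⟨hu0, hu₁⟩, rfl⟩
      obtain ⟨gp, hgpmem, hgpd⟩ := hm₁ 3 0 (by norm_num) le_rfl 0 (R + me/3)
        (by linarith [hme.1]) _ hQG hmem0 hmemb t₀ ⟨ht₀, by linarith [hme.1]⟩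
      simp only [if_pos ht₀R] at hgpd
      obtain ⟨c, hc, rfl⟩ := hgpmem
      exact statement14_aux_track hg₁ he₁ ht₀ ht₀₁ het₀ hc hgpd
    -- second concatenation: η then γ forwards, endpoints e and ℓ₂ v on ℓ₂
    have hcl₂ : dist (η t₀) (ℓ₂ t₀) ≤ 2 * N 3 0 := by
      have hdme : (0:ℝ) ≤ d - me := by linarith [hme.2]
      have hφ : ∀ m ∈ Icc (0:ℝ) (d - me), ∀ m' ∈ Icc (0:ℝ) (d - me),
          dist (γ (me + m)) (γ (me + m')) = |m - m'| := by
        intro m hm m' hm'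
        rw [hγ (me + m) ⟨by linarith [hm.1, hme.1], by linarith [hm.2]⟩
            (me + m') ⟨by linarith [hm'.1, hme.1], by linarith [hm'.2]⟩,
          show me + m - (me + m') = m - m' by ring]
      have hconn : η R = γ (me + 0) := by rw [add_zero]; exact hη1
      have hminy : ∀ m ∈ Icc (0:ℝ) (d - me), R ≤ dist e (γ (me + m)) := by
        intro m hm
        exact hminF (me + m) ⟨by linarith [hm.1, hme.1], by linarith [hm.2]⟩
      have hQG := statement14_aux_qg e η (fun m => γ (me + m)) R (d - me) hR0 hdme
        hη hφ hη0 hconn hminy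
      have hmem0 : (fun r => if r ≤ R then η r else (fun m => γ (me + m)) (3*(r - R))) 0
          ∈ ℓ₂ '' Icc 0 L₂ := by
        have hval : (fun r => if r ≤ R then η r else (fun m => γ (me + m)) (3*(r - R))) 0
            = η 0 := if_pos hR0
        rw [hval, hη0]
        exact ⟨0, ⟨le_rfl, hg₂.1⟩, he₂⟩
      have hmemb : (fun r => if r ≤ R then η r else (fun m => γ (me + m)) (3*(r - R)))
          (R + (d - me)/3) ∈ ℓ₂ '' Icc 0 L₂ := by
        have hval : (fun r => if r ≤ R then η r else (fun m => γ (me + m)) (3*(r - R)))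
            (R + (d - me)/3) = ℓ₂ v := by
          by_cases hc : R + (d - me)/3 ≤ R
          · have hme0 : d - me = 0 := le_antisymm (by linarith) hdme
            have h1 : (fun r => if r ≤ R then η r else (fun m => γ (me + m)) (3*(r - R)))
                (R + (d - me)/3) = η (R + (d - me)/3) := if_pos hc
            rw [h1, show R + (d - me)/3 = R by rw [hme0]; ring, hη1,
              show me = d by linarith]
            exact hγ1
          · have h1 : (fun r => if r ≤ R then η r else (fun m => γ (me + m)) (3*(r - R)))
                (R + (d - me)/3) = γ (me + 3*(R + (d - me)/3 - R)) := if_neg hc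
            rw [h1, show me + 3*(R + (d - me)/3 - R) = d by ring]
            exact hγ1
        rw [hval]
        exact ⟨v, ⟨hv0, hv₂⟩, rfl⟩
      obtain ⟨gp, hgpmem, hgpd⟩ := hm₂ 3 0 (by norm_num) le_rfl 0 (R + (d - me)/3)
        (by linarith [hdme]) _ hQG hmem0 hmemb t₀ ⟨ht₀, by linarith [hdme]⟩
      simp only [if_pos ht₀R] at hgpd
      obtain ⟨c, hc, rfl⟩ := hgpmem
      exact statement14_aux_track hg₂ he₂ ht₀ ht₀₂ het₀ hc hgpd
    have htri : dist (ℓ₁ t₀) (ℓ₂ t₀) ≤ 4 * N 3 0 := by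
      calc dist (ℓ₁ t₀) (ℓ₂ t₀) ≤ dist (ℓ₁ t₀) (η t₀) + dist (η t₀) (ℓ₂ t₀) :=
            dist_triangle _ _ _
        _ ≤ 2 * N 3 0 + 2 * N 3 0 := by
            rw [dist_comm (ℓ₁ t₀) (η t₀)]
            exact add_le_add hcl₁ hcl₂
        _ = 4 * N 3 0 := by ring
    linarith
  -- conclude: d ≥ u + v - 2R ≥ u + v - 2t₀
  have hdu : dist e (γ 0) = u := by
    rw [hγ0, ← he₁, hg₁.2 0 ⟨le_rfl, hg₁.1⟩ u ⟨hu0, hu₁⟩,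
      abs_of_nonpos (by linarith : (0:ℝ) - u ≤ 0), neg_sub, sub_zero]
  have hdv : dist e (γ d) = v := by
    rw [hγ1, ← he₂, hg₂.2 0 ⟨le_rfl, hg₂.1⟩ v ⟨hv0, hv₂⟩,
      abs_of_nonpos (by linarith : (0:ℝ) - v ≤ 0), neg_sub, sub_zero]
  have h1 : u ≤ R + me := by
    have htri := dist_triangle e (γ me) (γ 0)
    rw [hγ me hme 0 ⟨le_rfl, hd0⟩, sub_zero, abs_of_nonneg hme.1, hdu] at htri
    linarith
  have h2 : v ≤ R + (d - me) := by
    have htri := dist_triangle e (γ me) (γ d)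
    rw [hγ me hme d ⟨hd0, le_rfl⟩, abs_of_nonpos (by linarith [hme.2] : me - d ≤ 0),
      hdv] at htri
    linarith
  linarith

end Statement14Aux

/-- if two `N`-Morse geodesics from `e` stay more than `4N(3,0)`
apart after time `t₀` and are `≤ 6N(3,0)` apart at `t₀`, then the concatenation
`ℓ₁(t₁) → ℓ₁(t₀) → ℓ₂(t₀) → ℓ₂(t₂)` is a `(1, 12N(3,0))`-quasi-geodesic; in
particular the distance inequality holds. -/
theorem statement14 {X : Type*} [MetricSpace X] (hX : GeodesicSpace X) (e : X)
    (N : ℝ → ℝ → ℝ) (hN : IsMorseGauge N)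
    (ℓ₁ ℓ₂ : ℝ → X) (L₁ L₂ : ℝ)
    (hg₁ : IsGeodesicSeg ℓ₁ L₁) (hg₂ : IsGeodesicSeg ℓ₂ L₂)
    (hm₁ : IsMorseSet N (ℓ₁ '' Icc 0 L₁)) (hm₂ : IsMorseSet N (ℓ₂ '' Icc 0 L₂))
    (he₁ : ℓ₁ 0 = e) (he₂ : ℓ₂ 0 = e)
    (t₀ : ℝ) (ht₀ : 0 ≤ t₀)
    (hfar : ∀ t : ℝ, t₀ ≤ t → t ≤ L₁ → t ≤ L₂ → 4 * N 3 0 < dist (ℓ₁ t) (ℓ₂ t))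
    (hclose : dist (ℓ₁ t₀) (ℓ₂ t₀) ≤ 6 * N 3 0)
    (t₁ t₂ : ℝ) (ht₁ : t₀ ≤ t₁ ∧ t₁ ≤ L₁) (ht₂ : t₀ ≤ t₂ ∧ t₂ ≤ L₂)
    (g : ℝ → X) (hg : IsGeodesicFromTo g (ℓ₁ t₀) (ℓ₂ t₀)) :
    IsQuasiGeodesicOn 1 (12 * N 3 0)
      (Icc 0 ((t₁ - t₀) + dist (ℓ₁ t₀) (ℓ₂ t₀) + (t₂ - t₀)))
      (fun s => if s ≤ t₁ - t₀ then ℓ₁ (t₁ - s)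
        else if s ≤ t₁ - t₀ + dist (ℓ₁ t₀) (ℓ₂ t₀) then g (s - (t₁ - t₀))
        else ℓ₂ (t₀ + (s - (t₁ - t₀) - dist (ℓ₁ t₀) (ℓ₂ t₀)))) ∧
    dist (ℓ₁ t₁) (ℓ₂ t₂) ≥
      dist (ℓ₁ t₁) (ℓ₁ t₀) + dist (ℓ₁ t₀) (ℓ₂ t₀) + dist (ℓ₂ t₀) (ℓ₂ t₂)
        - 12 * N 3 0 := by
  have ht₀L₁ : t₀ ≤ L₁ := le_trans ht₁.1 ht₁.2
  have ht₀L₂ : t₀ ≤ L₂ := le_trans ht₂.1 ht₂.2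
  have hD4 : 4 * N 3 0 < dist (ℓ₁ t₀) (ℓ₂ t₀) := hfar t₀ le_rfl ht₀L₁ ht₀L₂
  have hMpos : 0 < N 3 0 := by linarith [hclose]
  have hD0 : (0:ℝ) ≤ dist (ℓ₁ t₀) (ℓ₂ t₀) := dist_nonneg
  have hD6 : dist (ℓ₁ t₀) (ℓ₂ t₀) ≤ 6 * N 3 0 := hclose
  have hA0 : (0:ℝ) ≤ t₁ - t₀ := by linarith [ht₁.1]
  have hC0 : (0:ℝ) ≤ t₂ - t₀ := by linarith [ht₂.1]
  obtain ⟨⟨hgD0, hgiso⟩, hg0, hgD⟩ := hg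
  have key : ∀ w z : ℝ, t₀ ≤ w → w ≤ L₁ → t₀ ≤ z → z ≤ L₂ →
      w + z - 2*t₀ ≤ dist (ℓ₁ w) (ℓ₂ z) :=
    fun w z h1 h2 h3 h4 => statement14_aux_key hX e N ℓ₁ ℓ₂ L₁ L₂ hg₁ hg₂ hm₁ hm₂
      he₁ he₂ t₀ ht₀ ht₀L₁ ht₀L₂ hD4 w z h1 h2 h3 h4
  set P := (fun s => if s ≤ t₁ - t₀ then ℓ₁ (t₁ - s)
        else if s ≤ t₁ - t₀ + dist (ℓ₁ t₀) (ℓ₂ t₀) then g (s - (t₁ - t₀))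
        else ℓ₂ (t₀ + (s - (t₁ - t₀) - dist (ℓ₁ t₀) (ℓ₂ t₀)))) with hP
  -- distance from ℓ₁ t₀ to points of g, and from points of g to ℓ₂ t₀
  have hgL : ∀ r, r ∈ Icc (0:ℝ) (dist (ℓ₁ t₀) (ℓ₂ t₀)) → dist (ℓ₁ t₀) (g r) = r := by
    intro r hr
    rw [← hg0, hgiso 0 ⟨le_rfl, hD0⟩ r hr,
      abs_of_nonpos (by linarith [hr.1] : (0:ℝ) - r ≤ 0), neg_sub, sub_zero]
  have hgR : ∀ r, r ∈ Icc (0:ℝ) (dist (ℓ₁ t₀) (ℓ₂ t₀)) →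
      dist (g r) (ℓ₂ t₀) = dist (ℓ₁ t₀) (ℓ₂ t₀) - r := by
    intro r hr
    have h5 : dist (g r) (g (dist (ℓ₁ t₀) (ℓ₂ t₀))) = dist (ℓ₁ t₀) (ℓ₂ t₀) - r := by
      rw [hgiso r hr (dist (ℓ₁ t₀) (ℓ₂ t₀)) ⟨hD0, le_rfl⟩,
        abs_of_nonpos (by linarith [hr.2] : r - dist (ℓ₁ t₀) (ℓ₂ t₀) ≤ 0), neg_sub]
    rw [hgD] at h5
    exact h5
  have aux : ∀ s t : ℝ, s ∈ Icc (0:ℝ) (t₁ - t₀ + dist (ℓ₁ t₀) (ℓ₂ t₀) + (t₂ - t₀)) →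
      t ∈ Icc (0:ℝ) (t₁ - t₀ + dist (ℓ₁ t₀) (ℓ₂ t₀) + (t₂ - t₀)) → s ≤ t →
      (t - s) - 12 * N 3 0 ≤ dist (P s) (P t) ∧
        dist (P s) (P t) ≤ (t - s) + 12 * N 3 0 := by
    intro s t hs ht hst
    by_cases htA : t ≤ t₁ - t₀
    · -- both on the ℓ₁-leg
      have hsA : s ≤ t₁ - t₀ := le_trans hst htA
      have hPs : P s = ℓ₁ (t₁ - s) := by rw [hP]; exact if_pos hsA
      have hPt : P t = ℓ₁ (t₁ - t) := by rw [hP]; exact if_pos htA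
      have hd : dist (ℓ₁ (t₁ - s)) (ℓ₁ (t₁ - t)) = t - s := by
        rw [hg₁.2 _ ⟨by linarith [hs.1], by linarith [ht₁.2, hs.1]⟩
            _ ⟨by linarith, by linarith [ht₁.2, ht.1]⟩,
          show t₁ - s - (t₁ - t) = t - s by ring, abs_of_nonneg (by linarith)]
      rw [hPs, hPt, hd]
      constructor <;> linarith
    · push_neg at htA
      by_cases htB : t ≤ t₁ - t₀ + dist (ℓ₁ t₀) (ℓ₂ t₀)
      · -- t on the g-leg
        have hPt : P t = g (t - (t₁ - t₀)) := by
          rw [hP]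
          exact (if_neg (not_le.mpr htA)).trans (if_pos htB)
        have htmem : t - (t₁ - t₀) ∈ Icc (0:ℝ) (dist (ℓ₁ t₀) (ℓ₂ t₀)) :=
          ⟨by linarith, by linarith⟩
        by_cases hsA : s ≤ t₁ - t₀
        · -- s on the ℓ₁-leg, t on the g-leg
          have hPs : P s = ℓ₁ (t₁ - s) := by rw [hP]; exact if_pos hsA
          have e1 : dist (ℓ₁ (t₁ - s)) (ℓ₁ t₀) = (t₁ - t₀) - s := by
            rw [hg₁.2 _ ⟨by linarith [hs.1], by linarith [ht₁.2, hs.1]⟩ t₀ ⟨ht₀, ht₀L₁⟩,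
              show t₁ - s - t₀ = (t₁ - t₀) - s by ring, abs_of_nonneg (by linarith)]
          have e2 : dist (ℓ₁ t₀) (g (t - (t₁ - t₀))) = t - (t₁ - t₀) := hgL _ htmem
          rw [hPs, hPt]
          constructor
          · have htri := dist_triangle (ℓ₁ (t₁ - s)) (g (t - (t₁ - t₀))) (ℓ₁ t₀)
            rw [e1, dist_comm (g (t - (t₁ - t₀))) (ℓ₁ t₀), e2] at htri
            linarith [htmem.2]
          · have htri := dist_triangle (ℓ₁ (t₁ - s)) (ℓ₁ t₀) (g (t - (t₁ - t₀)))
            rw [e1, e2] at htri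
            linarith
        · -- both on the g-leg
          push_neg at hsA
          have hPs : P s = g (s - (t₁ - t₀)) := by
            rw [hP]
            exact (if_neg (not_le.mpr hsA)).trans (if_pos (le_trans hst htB))
          have hsmem : s - (t₁ - t₀) ∈ Icc (0:ℝ) (dist (ℓ₁ t₀) (ℓ₂ t₀)) :=
            ⟨by linarith, by linarith⟩
          rw [hPs, hPt, hgiso _ hsmem _ htmem,
            show s - (t₁ - t₀) - (t - (t₁ - t₀)) = s - t by ring,
            abs_of_nonpos (by linarith : s - t ≤ 0), neg_sub]
          constructor <;> linarith
      · -- t on the ℓ₂-leg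
        push_neg at htB
        have hPt : P t = ℓ₂ (t₀ + (t - (t₁ - t₀) - dist (ℓ₁ t₀) (ℓ₂ t₀))) := by
          rw [hP]
          exact (if_neg (not_le.mpr htA)).trans (if_neg (not_le.mpr htB))
        have hvt₀ : t₀ ≤ t₀ + (t - (t₁ - t₀) - dist (ℓ₁ t₀) (ℓ₂ t₀)) := by linarith
        have hvt₂ : t₀ + (t - (t₁ - t₀) - dist (ℓ₁ t₀) (ℓ₂ t₀)) ≤ t₂ := by
          linarith [ht.2]
        have hvtL : t₀ + (t - (t₁ - t₀) - dist (ℓ₁ t₀) (ℓ₂ t₀)) ≤ L₂ :=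
          le_trans hvt₂ ht₂.2
        have hvt0 : (0:ℝ) ≤ t₀ + (t - (t₁ - t₀) - dist (ℓ₁ t₀) (ℓ₂ t₀)) :=
          le_trans ht₀ hvt₀
        have e2 : dist (ℓ₂ t₀) (ℓ₂ (t₀ + (t - (t₁ - t₀) - dist (ℓ₁ t₀) (ℓ₂ t₀))))
            = t - (t₁ - t₀) - dist (ℓ₁ t₀) (ℓ₂ t₀) := by
          rw [hg₂.2 t₀ ⟨ht₀, ht₀L₂⟩ _ ⟨hvt0, hvtL⟩,
            show t₀ - (t₀ + (t - (t₁ - t₀) - dist (ℓ₁ t₀) (ℓ₂ t₀)))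
              = -(t - (t₁ - t₀) - dist (ℓ₁ t₀) (ℓ₂ t₀)) by ring,
            abs_neg, abs_of_nonneg (by linarith)]
        by_cases hsA : s ≤ t₁ - t₀
        · -- s on the ℓ₁-leg, t on the ℓ₂-leg: the key case
          have hPs : P s = ℓ₁ (t₁ - s) := by rw [hP]; exact if_pos hsA
          have hu₀ : t₀ ≤ t₁ - s := by linarith
          have hu₁ : t₁ - s ≤ L₁ := by linarith [hs.1, ht₁.2]
          have hlow := key (t₁ - s) (t₀ + (t - (t₁ - t₀) - dist (ℓ₁ t₀) (ℓ₂ t₀)))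
            hu₀ hu₁ hvt₀ hvtL
          constructor
          · rw [hPs, hPt]
            have harith : (t₁ - s) + (t₀ + (t - (t₁ - t₀) - dist (ℓ₁ t₀) (ℓ₂ t₀))) - 2*t₀
                = (t - s) - dist (ℓ₁ t₀) (ℓ₂ t₀) := by ring
            linarith
          · rw [hPs, hPt]
            have e1 : dist (ℓ₁ (t₁ - s)) (ℓ₁ t₀) = (t₁ - t₀) - s := by
              rw [hg₁.2 _ ⟨by linarith [hs.1], by linarith [ht₁.2, hs.1]⟩ t₀ ⟨ht₀, ht₀L₁⟩,
                show t₁ - s - t₀ = (t₁ - t₀) - s by ring, abs_of_nonneg (by linarith)]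
            have htri := dist_triangle4 (ℓ₁ (t₁ - s)) (ℓ₁ t₀) (ℓ₂ t₀)
              (ℓ₂ (t₀ + (t - (t₁ - t₀) - dist (ℓ₁ t₀) (ℓ₂ t₀))))
            rw [e1, e2] at htri
            linarith
        · push_neg at hsA
          by_cases hsB : s ≤ t₁ - t₀ + dist (ℓ₁ t₀) (ℓ₂ t₀)
          · -- s on the g-leg, t on the ℓ₂-leg
            have hPs : P s = g (s - (t₁ - t₀)) := by
              rw [hP]
              exact (if_neg (not_le.mpr hsA)).trans (if_pos hsB)
            have hsmem : s - (t₁ - t₀) ∈ Icc (0:ℝ) (dist (ℓ₁ t₀) (ℓ₂ t₀)) :=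
              ⟨by linarith, by linarith⟩
            have e3 : dist (g (s - (t₁ - t₀))) (ℓ₂ t₀)
                = dist (ℓ₁ t₀) (ℓ₂ t₀) - (s - (t₁ - t₀)) := hgR _ hsmem
            rw [hPs, hPt]
            constructor
            · have htri := dist_triangle (ℓ₂ t₀) (g (s - (t₁ - t₀)))
                (ℓ₂ (t₀ + (t - (t₁ - t₀) - dist (ℓ₁ t₀) (ℓ₂ t₀))))
              rw [dist_comm (ℓ₂ t₀) (g (s - (t₁ - t₀))), e3] at htri
              rw [e2] at htri
              linarith [hsmem.1]
            · have htri := dist_triangle (g (s - (t₁ - t₀))) (ℓ₂ t₀)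
                (ℓ₂ (t₀ + (t - (t₁ - t₀) - dist (ℓ₁ t₀) (ℓ₂ t₀))))
              rw [e3, e2] at htri
              linarith
          · -- both on the ℓ₂-leg
            push_neg at hsB
            have hPs : P s = ℓ₂ (t₀ + (s - (t₁ - t₀) - dist (ℓ₁ t₀) (ℓ₂ t₀))) := by
              rw [hP]
              exact (if_neg (not_le.mpr hsA)).trans (if_neg (not_le.mpr hsB))
            have hvs₀ : t₀ ≤ t₀ + (s - (t₁ - t₀) - dist (ℓ₁ t₀) (ℓ₂ t₀)) := by linarith
            have hvs0 : (0:ℝ) ≤ t₀ + (s - (t₁ - t₀) - dist (ℓ₁ t₀) (ℓ₂ t₀)) :=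
              le_trans ht₀ hvs₀
            have hvsL : t₀ + (s - (t₁ - t₀) - dist (ℓ₁ t₀) (ℓ₂ t₀)) ≤ L₂ := by
              have : t₀ + (s - (t₁ - t₀) - dist (ℓ₁ t₀) (ℓ₂ t₀)) ≤ t₂ := by
                linarith [hs.2]
              linarith [ht₂.2]
            rw [hPs, hPt, hg₂.2 _ ⟨hvs0, hvsL⟩ _ ⟨hvt0, hvtL⟩,
              show t₀ + (s - (t₁ - t₀) - dist (ℓ₁ t₀) (ℓ₂ t₀))
                - (t₀ + (t - (t₁ - t₀) - dist (ℓ₁ t₀) (ℓ₂ t₀))) = s - t by ring,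
              abs_of_nonpos (by linarith : s - t ≤ 0), neg_sub]
            constructor <;> linarith
  constructor
  · intro s hs t ht
    rcases le_total s t with h|h
    · obtain ⟨h1, h2⟩ := aux s t hs ht h
      rw [abs_of_nonpos (by linarith : s - t ≤ 0)]
      constructor
      · calc -(s - t)/1 - 12 * N 3 0 = (t - s) - 12 * N 3 0 := by ring
          _ ≤ _ := h1
      · calc dist (P s) (P t) ≤ (t - s) + 12 * N 3 0 := h2
          _ = 1 * -(s - t) + 12 * N 3 0 := by ring
    · obtain ⟨h1, h2⟩ := aux t s ht hs h
      rw [dist_comm (P t) (P s)] at h1 h2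
      rw [abs_of_nonneg (by linarith : (0:ℝ) ≤ s - t)]
      constructor
      · calc (s - t)/1 - 12 * N 3 0 = (s - t) - 12 * N 3 0 := by ring
          _ ≤ _ := h1
      · calc dist (P s) (P t) ≤ (s - t) + 12 * N 3 0 := h2
          _ = 1 * (s - t) + 12 * N 3 0 := by ring
  · have hT0 : (0:ℝ) ≤ t₁ - t₀ + dist (ℓ₁ t₀) (ℓ₂ t₀) + (t₂ - t₀) := by linarith
    obtain ⟨h1, _⟩ := aux 0 (t₁ - t₀ + dist (ℓ₁ t₀) (ℓ₂ t₀) + (t₂ - t₀))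
      ⟨le_rfl, hT0⟩ ⟨hT0, le_rfl⟩ hT0
    have hP0 : P 0 = ℓ₁ t₁ := by
      rw [hP]
      exact (if_pos hA0).trans (by rw [sub_zero])
    have hPT : P (t₁ - t₀ + dist (ℓ₁ t₀) (ℓ₂ t₀) + (t₂ - t₀)) = ℓ₂ t₂ := by
      by_cases hc : t₁ - t₀ + dist (ℓ₁ t₀) (ℓ₂ t₀) + (t₂ - t₀)
          ≤ t₁ - t₀ + dist (ℓ₁ t₀) (ℓ₂ t₀)
      · have h22 : t₂ = t₀ := by linarith
        have hnc1 : ¬ (t₁ - t₀ + dist (ℓ₁ t₀) (ℓ₂ t₀) + (t₂ - t₀) ≤ t₁ - t₀) := by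
          push_neg
          have h23 : (0:ℝ) < dist (ℓ₁ t₀) (ℓ₂ t₀) := by linarith
          linarith
        have hval : P (t₁ - t₀ + dist (ℓ₁ t₀) (ℓ₂ t₀) + (t₂ - t₀))
            = g (t₁ - t₀ + dist (ℓ₁ t₀) (ℓ₂ t₀) + (t₂ - t₀) - (t₁ - t₀)) := by
          rw [hP]
          exact (if_neg hnc1).trans (if_pos hc)
        rw [hval,
          show t₁ - t₀ + dist (ℓ₁ t₀) (ℓ₂ t₀) + (t₂ - t₀) - (t₁ - t₀)
            = dist (ℓ₁ t₀) (ℓ₂ t₀) by rw [h22]; ring, hgD, h22]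
      · push_neg at hc
        have hnc1 : ¬ (t₁ - t₀ + dist (ℓ₁ t₀) (ℓ₂ t₀) + (t₂ - t₀) ≤ t₁ - t₀) := by
          push_neg
          linarith
        have hval : P (t₁ - t₀ + dist (ℓ₁ t₀) (ℓ₂ t₀) + (t₂ - t₀))
            = ℓ₂ (t₀ + (t₁ - t₀ + dist (ℓ₁ t₀) (ℓ₂ t₀) + (t₂ - t₀) - (t₁ - t₀)
                - dist (ℓ₁ t₀) (ℓ₂ t₀))) := by
          rw [hP]
          exact (if_neg hnc1).trans (if_neg (not_le.mpr hc))
        rw [hval]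
        congr 1
        ring
    rw [hP0, hPT] at h1
    have e1 : dist (ℓ₁ t₁) (ℓ₁ t₀) = t₁ - t₀ := by
      rw [hg₁.2 t₁ ⟨le_trans ht₀ ht₁.1, ht₁.2⟩ t₀ ⟨ht₀, ht₀L₁⟩,
        abs_of_nonneg (by linarith [ht₁.1])]
    have e2 : dist (ℓ₂ t₀) (ℓ₂ t₂) = t₂ - t₀ := by
      rw [hg₂.2 t₀ ⟨ht₀, ht₀L₂⟩ t₂ ⟨le_trans ht₀ ht₂.1, ht₂.2⟩,
        abs_of_nonpos (by linarith [ht₂.1] : t₀ - t₂ ≤ 0), neg_sub]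
    rw [ge_iff_le, e1, e2]
    linarith
end
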